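/- arXiv:1711.01370 — 5 statements merged into one kernel-verified Lean document; each statement's English description precedes it below -/
import Mathlib

section
/- Let T be a finite tree and let G be the directed tree obtained from T by replacing each edge {a,b} with the two directed edges (a,b) and (b,a), each carrying a nonnegative weight w; let d be the shortest-path quasimetric of G (the total weight of the unique directed path between two vertices). For each directed edge e = (a,b) of G, let S_e ⊆ V(T) be the vertex set of the connected component of a in T with the edge {a,b} removed. Then for all u, v ∈ V(T): d(u,v) = Σ_{e ∈ E(G)} w(e) · d_{S_e}(u,v). In particular, the shortest-path quasimetric of a directed tree embeds isometrically into directed ℓ1. -/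
open scoped ENNReal NNReal

noncomputable section

/-- Cost of a walk (given as the list of consecutive vertices visited) under
edge weights `w` (where `w u v = ⊤` encodes the absence of the edge `(u,v)`). -/
def walkCost {V : Type*} (w : V → V → ℝ≥0∞) : List V → ℝ≥0∞
  | [] => 0
  | [_] => 0
  | a :: b :: l => w a b + walkCost w (b :: l)

/-- Shortest-path quasimetric induced by edge weights `w`:
the infimum of the cost over all walks from `u` to `v` (`⊤` if unreachable). -/
def spDist {V : Type*} (w : V → V → ℝ≥0∞) (u v : V) : ℝ≥0∞ :=
  ⨅ l : { l : List V // l.head? = some u ∧ l.getLast? = some v }, walkCost w l.1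

-- The directed cut metric associated with the set `S` (valued in `ℝ≥0∞`).
open Classical in
def dcutE {X : Type*} (S : Set X) (x y : X) : ℝ≥0∞ :=
  if x ∈ S ∧ y ∉ S then 1 else 0

namespace Stmt5Aux

variable {V : Type*}

lemma walkCost_eq (w : V → V → ℝ≥0∞) : ∀ l : List V,
    walkCost w l = ((l.zip l.tail).map fun p => w p.1 p.2).sum
  | [] => rfl
  | [a] => by simp [walkCost]
  | a :: b :: t => by
      rw [walkCost, walkCost_eq w (b :: t)]
      simp [List.zip_cons_cons]

lemma le_list_sum {α : Type*} (f : α → ℝ≥0∞) {x : α} : ∀ {l : List α}, x ∈ l →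
    f x ≤ (l.map f).sum := by
  intro l hl
  induction l with
  | nil => simp at hl
  | cons a t ih =>
    rcases List.mem_cons.mp hl with h | h
    · subst h; simp only [List.map_cons, List.sum_cons]; exact le_self_add
    · simp only [List.map_cons, List.sum_cons]
      exact le_add_left (ih h)

lemma toFinset_sum_le {α : Type*} [DecidableEq α] (f : α → ℝ≥0∞) (l : List α) :
    ∑ p ∈ l.toFinset, f p ≤ (l.map f).sum := by
  induction l with
  | nil => simp
  | cons a t ih =>
    rw [List.toFinset_cons, List.map_cons, List.sum_cons]
    by_cases h : a ∈ t.toFinset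
    · rw [Finset.insert_eq_self.mpr h]; exact le_add_left ih
    · rw [Finset.sum_insert h]; exact add_le_add le_rfl ih

lemma sum_toFinset_of_nodup {α : Type*} [DecidableEq α] (f : α → ℝ≥0∞) {l : List α}
    (hl : l.Nodup) : ∑ p ∈ l.toFinset, f p = (l.map f).sum := by
  induction l with
  | nil => simp
  | cons a t ih =>
    rw [List.toFinset_cons, List.map_cons, List.sum_cons,
      Finset.sum_insert (by simpa using (List.nodup_cons.mp hl).1), ih (List.nodup_cons.mp hl).2]

lemma zip_map_fst_sublist : ∀ l : List V, ((l.zip l.tail).map Prod.fst).Sublist l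
  | [] => by simp
  | [a] => by simp
  | a :: b :: t => by
      simpa [List.zip_cons_cons] using (zip_map_fst_sublist (b :: t)).cons₂ a

lemma zip_nodup {l : List V} (hl : l.Nodup) : (l.zip l.tail).Nodup :=
  (((zip_map_fst_sublist l).nodup hl)).of_map Prod.fst

lemma exists_cross (S : Set V) : ∀ (l : List V) (u v : V), l.head? = some u →
    l.getLast? = some v → u ∈ S → v ∉ S →
    ∃ p ∈ l.zip l.tail, p.1 ∈ S ∧ p.2 ∉ S := by
  intro l
  induction l with
  | nil => intro u v hu; simp at hu
  | cons a t ih =>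
    intro u v hu hv huS hvS
    have ha : a = u := by simpa using hu
    subst ha
    cases t with
    | nil =>
      simp at hv; subst hv; exact absurd huS hvS
    | cons b t' =>
      by_cases hb : b ∈ S
      · obtain ⟨p, hp, h1, h2⟩ := ih b v (by simp) (by
          rw [List.getLast?_cons_cons] at hv; exact hv) hb hvS
        exact ⟨p, by simp [List.zip_cons_cons]; right; simpa using hp, h1, h2⟩
      · exact ⟨(a, b), by simp [List.zip_cons_cons], huS, hb⟩

open SimpleGraph

lemma edges_eq_zip {G : SimpleGraph V} {u v : V} (W : G.Walk u v) :
    W.edges = (W.support.zip W.support.tail).map fun p => s(p.1, p.2) := by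
  induction W with
  | nil => simp
  | @cons u u' v h W ih =>
    rw [Walk.edges_cons, ih, Walk.support_cons, W.support_eq_cons]
    simp only [List.tail_cons, List.zip_cons_cons, List.map_cons]

lemma path_cross {G : SimpleGraph V} (hG : G.IsAcyclic) {u v : V} (W : G.Walk u v)
    (hW : W.IsPath) :
    ∀ p ∈ W.support.zip W.support.tail,
      (G.deleteEdges {s(p.1, p.2)}).Reachable u p.1 ∧
      ¬ (G.deleteEdges {s(p.1, p.2)}).Reachable v p.1 := by
  induction W with
  | nil => simp
  | @cons u u' v h W ih =>
    intro p hp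
    rw [Walk.support_cons, W.support_eq_cons] at hp
    rw [List.tail_cons, List.zip_cons_cons, List.mem_cons] at hp
    have hnotmem : s(u, u') ∉ W.edges := by
      have := hW.edges_nodup
      rw [Walk.edges_cons, List.nodup_cons] at this
      exact this.1
    rcases hp with rfl | hp
    · -- p = (u, u')
      refine ⟨Reachable.refl u, ?_⟩
      have hbridge : ¬ (G.deleteEdges {s(u, u')}).Reachable u u' := by
        have := (isAcyclic_iff_forall_adj_isBridge.mp hG) h
        rw [isBridge_iff] at this
        exact this
      intro hr
      have hW' : (G.deleteEdges {s(u, u')}).Reachable u' v :=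
        ⟨W.toDeleteEdges _ (fun e he => by
          simp only [Set.mem_singleton_iff]
          rintro rfl; exact hnotmem he)⟩
      exact hbridge ((hW'.trans hr).symm)
    · -- p inside W
      have hp' : p ∈ W.support.zip W.support.tail := by
        rw [← W.support_eq_cons] at hp; exact hp
      obtain ⟨h1, h2⟩ := ih hW.of_cons p hp'
      refine ⟨?_, h2⟩
      have hne : s(u, u') ≠ s(p.1, p.2) := by
        intro heq
        apply hnotmem
        rw [edges_eq_zip W, heq]
        exact List.mem_map.mpr ⟨p, hp', rfl⟩
      have hadj : (G.deleteEdges {s(p.1, p.2)}).Adj u u' :=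
        deleteEdges_adj.mpr ⟨h, by simpa using hne⟩
      exact hadj.reachable.trans h1

end Stmt5Aux

open SimpleGraph Stmt5Aux

open Classical in
/-- Exact directed-ℓ1 decomposition of the shortest-path quasimetric of a directed tree:
`d(u,v) = Σ_{e=(a,b) directed edge} w(e) · d_{S_e}(u,v)`, where `S_e` is the vertex set
of the connected component of `a` in the tree with edge `{a,b}` removed. -/
theorem stmt5 (V : Type) [Fintype V] (T : SimpleGraph V) (hT : T.IsTree)
    (w : V → V → ℝ≥0) :
    ∀ u v : V,
      spDist (fun x y => if T.Adj x y then (w x y : ℝ≥0∞) else ⊤) u v =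
        ∑ p : V × V,
          (if T.Adj p.1 p.2 then
            (w p.1 p.2 : ℝ≥0∞) *
              dcutE { x | (T.deleteEdges {s(p.1, p.2)}).Reachable x p.1 } u v
          else 0) := by
  classical
  intro u v
  set w' : V → V → ℝ≥0∞ := fun x y => if T.Adj x y then (w x y : ℝ≥0∞) else ⊤ with hw'
  set cond : V × V → Prop := fun p => T.Adj p.1 p.2 ∧
      (T.deleteEdges {s(p.1, p.2)}).Reachable u p.1 ∧
      ¬ (T.deleteEdges {s(p.1, p.2)}).Reachable v p.1 with hcond
  have hRHS : (∑ p : V × V,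
          (if T.Adj p.1 p.2 then
            (w p.1 p.2 : ℝ≥0∞) *
              dcutE { x | (T.deleteEdges {s(p.1, p.2)}).Reachable x p.1 } u v
          else 0)) = ∑ p ∈ Finset.univ.filter cond, (w p.1 p.2 : ℝ≥0∞) := by
    rw [Finset.sum_filter]
    refine Finset.sum_congr rfl fun p _ => ?_
    by_cases hadj : T.Adj p.1 p.2
    · simp only [hadj, if_true, dcutE, hcond]
      by_cases hc : (T.deleteEdges {s(p.1, p.2)}).Reachable u p.1 ∧
          ¬ (T.deleteEdges {s(p.1, p.2)}).Reachable v p.1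
      · simp [hc, hadj]
      · simp only [Set.mem_setOf_eq]
        rw [if_neg hc, if_neg (by simpa [hadj] using hc)]
        simp
    · simp [hadj, hcond]
  rw [hRHS]
  -- bridge fact
  have hbridge : ∀ {a b : V}, T.Adj a b → ¬ (T.deleteEdges {s(a, b)}).Reachable a b := by
    intro a b hab
    have := (isAcyclic_iff_forall_adj_isBridge.mp hT.IsAcyclic) hab
    rw [isBridge_iff] at this
    exact this
  refine le_antisymm ?_ ?_
  · -- spDist ≤ RHS using the tree path
    obtain ⟨W⟩ := hT.isConnected.preconnected u v
    set P := W.toPath with hP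
    set l := P.1.support with hl
    have hhead : l.head? = some u := by rw [hl, P.1.support_eq_cons]; rfl
    have hlast : l.getLast? = some v := by
      rw [hl, List.getLast?_eq_getLast (P.1.support_ne_nil), P.1.getLast_support]
    refine le_trans (iInf_le _ ⟨l, hhead, hlast⟩) ?_
    rw [walkCost_eq]
    have hcross := path_cross hT.IsAcyclic P.1 P.2
    have hmem : ∀ p ∈ l.zip l.tail, cond p := by
      intro p hp
      obtain ⟨h1, h2⟩ := hcross p hp
      refine ⟨P.1.adj_of_mem_edges ?_, h1, h2⟩
      rw [edges_eq_zip]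
      exact List.mem_map.mpr ⟨p, hp, rfl⟩
    calc ((l.zip l.tail).map fun p => w' p.1 p.2).sum
        = ∑ p ∈ (l.zip l.tail).toFinset, w' p.1 p.2 :=
          (sum_toFinset_of_nodup _ (zip_nodup P.2.support_nodup)).symm
      _ = ∑ p ∈ (l.zip l.tail).toFinset, (w p.1 p.2 : ℝ≥0∞) := by
          refine Finset.sum_congr rfl fun p hp => ?_
          have := (hmem p (List.mem_toFinset.mp hp)).1
          simp [hw', this]
      _ ≤ ∑ p ∈ Finset.univ.filter cond, (w p.1 p.2 : ℝ≥0∞) := by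
          refine Finset.sum_le_sum_of_subset fun p hp => ?_
          rw [Finset.mem_filter]
          exact ⟨Finset.mem_univ _, hmem p (List.mem_toFinset.mp hp)⟩
  · -- RHS ≤ spDist
    refine le_iInf fun ⟨l, h1, h2⟩ => ?_
    rw [walkCost_eq]
    by_cases hall : ∀ p ∈ l.zip l.tail, T.Adj p.1 p.2
    · have hsub : Finset.univ.filter cond ⊆ (l.zip l.tail).toFinset := by
        intro p hp
        rw [Finset.mem_filter] at hp
        obtain ⟨-, hadj, hu, hv⟩ := hp
        obtain ⟨q, hq, hq1, hq2⟩ := exists_cross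
          { x | (T.deleteEdges {s(p.1, p.2)}).Reachable x p.1 } l u v h1 h2 hu hv
        have hqadj : T.Adj q.1 q.2 := hall q hq
        have heq : q = p := by
          by_cases hne : s(q.1, q.2) = s(p.1, p.2)
          · rcases Sym2.eq_iff.mp hne with ⟨e1, e2⟩ | ⟨e1, e2⟩
            · exact Prod.ext e1 e2
            · exfalso
              apply hbridge hadj
              have : (T.deleteEdges {s(p.1, p.2)}).Reachable q.1 p.1 := hq1
              rw [e1] at this
              exact this.symm.symm |>.symm
          · exfalso
            apply hq2
            have hadj' : (T.deleteEdges {s(p.1, p.2)}).Adj q.1 q.2 :=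
              deleteEdges_adj.mpr ⟨hqadj, by simpa using hne⟩
            exact hadj'.symm.reachable.trans hq1
        rw [heq] at hq
        exact List.mem_toFinset.mpr hq
      calc ∑ p ∈ Finset.univ.filter cond, (w p.1 p.2 : ℝ≥0∞)
          = ∑ p ∈ Finset.univ.filter cond, w' p.1 p.2 := by
            refine Finset.sum_congr rfl fun p hp => ?_
            have := (Finset.mem_filter.mp hp).2.1
            simp [hw', this]
        _ ≤ ∑ p ∈ (l.zip l.tail).toFinset, w' p.1 p.2 :=
            Finset.sum_le_sum_of_subset hsub
        _ ≤ ((l.zip l.tail).map fun p => w' p.1 p.2).sum := toFinset_sum_le _ _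
    · push_neg at hall
      obtain ⟨p, hp, hpadj⟩ := hall
      have : w' p.1 p.2 = ⊤ := by simp [hw', hpadj]
      have htop : ((l.zip l.tail).map fun p => w' p.1 p.2).sum = ⊤ :=
        top_le_iff.mp (this ▸ le_list_sum (fun p => w' p.1 p.2) hp)
      rw [htop]
      exact le_top
end
end

section
/- Let n ≥ 2 and let T be a finite tree on vertex set {v_0, …, v_{n−1}} (exactly these n vertices), made into a directed tree with nonnegative weights on its directed edges, with shortest-path quasimetric ρ. Suppose that ρ(u,v) + ρ(v,u) ≥ n for every pair of distinct vertices u, v. Then Σ_{i=0}^{n−1} ρ(v_i, v_{(i+1) mod n}) ≥ n(n−1). -/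
open scoped ENNReal NNReal

noncomputable section

open Classical in
def treeW {W : Type*} (T : SimpleGraph W) (wt : W → W → ℝ≥0) : W → W → ℝ≥0∞ :=
  fun x y => if T.Adj x y then (wt x y : ℝ≥0∞) else ⊤

namespace Aux

variable {V : Type*} [Fintype V] (T : SimpleGraph V) (wt : V → V → ℝ≥0)

/-- `x` is on the `b`-side of the directed edge `(a,b)`. -/
def eR (a b x : V) : Prop := (T.deleteEdges {s(a,b)}).Reachable b x

open Classical in
def Dd (u v : V) : ℝ≥0∞ :=
  ∑ p : V × V, if T.Adj p.1 p.2 ∧ ¬ eR T p.1 p.2 u ∧ eR T p.1 p.2 v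
    then (wt p.1 p.2 : ℝ≥0∞) else 0

lemma eR_self (a b : V) : eR T a b b := SimpleGraph.Reachable.refl b

lemma eR_step {a b x y : V} (hxy : T.Adj x y) (hx : ¬ eR T a b x) (hy : eR T a b y) :
    x = a ∧ y = b := by
  by_cases hs : s(x,y) = s(a,b)
  · rcases Sym2.eq_iff.1 hs with ⟨h1, h2⟩ | ⟨h1, h2⟩
    · exact ⟨h1, h2⟩
    · exact absurd (show eR T a b x by rw [h1]; exact eR_self T a b) hx
  · exfalso
    apply hx
    refine hy.trans (SimpleGraph.Adj.reachable ?_)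
    rw [SimpleGraph.deleteEdges_adj]
    refine ⟨hxy.symm, ?_⟩
    simp only [Set.mem_singleton_iff]
    rw [Sym2.eq_swap]
    exact hs

lemma key_step (x y v : V) : Dd T wt x v ≤ treeW T wt x y + Dd T wt y v := by
  classical
  by_cases hxy : T.Adj x y
  · have hpt : ∀ p : V × V,
        (if T.Adj p.1 p.2 ∧ ¬ eR T p.1 p.2 x ∧ eR T p.1 p.2 v then (wt p.1 p.2 : ℝ≥0∞) else 0)
        ≤ (if T.Adj p.1 p.2 ∧ ¬ eR T p.1 p.2 y ∧ eR T p.1 p.2 v then (wt p.1 p.2 : ℝ≥0∞) else 0)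
          + (if p = (x, y) then (wt x y : ℝ≥0∞) else 0) := by
      rintro ⟨a, b⟩
      by_cases hC : T.Adj a b ∧ ¬ eR T a b x ∧ eR T a b v
      · rw [if_pos hC]
        by_cases hy : eR T a b y
        · obtain ⟨rfl, rfl⟩ := eR_step T hxy hC.2.1 hy
          simp
        · rw [if_pos ⟨hC.1, hy, hC.2.2⟩]
          exact le_add_right le_rfl
      · rw [if_neg hC]; exact zero_le
    calc Dd T wt x v ≤ ∑ p : V × V,
        ((if T.Adj p.1 p.2 ∧ ¬ eR T p.1 p.2 y ∧ eR T p.1 p.2 v then (wt p.1 p.2 : ℝ≥0∞) else 0)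
          + (if p = (x, y) then (wt x y : ℝ≥0∞) else 0)) := Finset.sum_le_sum fun p _ => hpt p
      _ = Dd T wt y v + ∑ p : V × V, (if p = (x, y) then (wt x y : ℝ≥0∞) else 0) := by
          rw [Finset.sum_add_distrib]; rfl
      _ = Dd T wt y v + (wt x y : ℝ≥0∞) := by
          rw [Finset.sum_ite_eq' Finset.univ (x, y) (fun _ => (wt x y : ℝ≥0∞))]
          simp
      _ = treeW T wt x y + Dd T wt y v := by rw [treeW, if_pos hxy, add_comm]
  · simp [treeW, hxy]

lemma Dd_self (u : V) : Dd T wt u u = 0 := by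
  unfold Dd
  refine Finset.sum_eq_zero fun p _ => ?_
  rw [if_neg]; rintro ⟨_, h1, h2⟩; exact h1 h2

lemma walk_lb : ∀ (l : List V) (u v : V), l.head? = some u → l.getLast? = some v →
    Dd T wt u v ≤ walkCost (treeW T wt) l
  | [], u, v, h, _ => by simp at h
  | [x], u, v, h, h' => by
      simp only [List.head?, List.getLast?] at h h'
      obtain rfl : x = u := by injection h
      obtain rfl : x = v := by injection h'
      rw [Dd_self]; exact zero_le
  | x :: y :: l, u, v, h, h' => by
      have hxu : x = u := by injection h
      subst hxu
      have h'' : (y :: l).getLast? = some v := by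
        rwa [List.getLast?_cons_cons] at h'
      calc Dd T wt x v ≤ treeW T wt x y + Dd T wt y v := key_step T wt x y v
        _ ≤ treeW T wt x y + walkCost (treeW T wt) (y :: l) := by
            exact add_le_add le_rfl (walk_lb (y :: l) y v rfl h'')
        _ = walkCost (treeW T wt) (x :: y :: l) := rfl

lemma Dd_le_spDist (u v : V) : Dd T wt u v ≤ spDist (treeW T wt) u v :=
  le_iInf fun ⟨l, h1, h2⟩ => walk_lb T wt l u v h1 h2

lemma spDist_le_wt {a b : V} (h : T.Adj a b) :
    spDist (treeW T wt) a b ≤ (wt a b : ℝ≥0∞) := by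
  have : walkCost (treeW T wt) [a, b] = (wt a b : ℝ≥0∞) := by
    show treeW T wt a b + 0 = _
    rw [treeW, if_pos h, add_zero]
  exact (iInf_le _ (⟨[a, b], rfl, rfl⟩ :
    { l : List V // l.head? = some a ∧ l.getLast? = some b })).trans this.le

lemma eR_not {a b : V} (hac : T.IsAcyclic) (h : T.Adj a b) : ¬ eR T a b a := by
  have hbr := (SimpleGraph.isAcyclic_iff_forall_adj_isBridge.mp hac) h
  rw [SimpleGraph.isBridge_iff] at hbr
  intro hr
  exact hbr hr.symm

lemma exists_cross {n : ℕ} [NeZero n] {P : ZMod n → Prop} {a b : ZMod n}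
    (hb : P b) (ha : ¬ P a) : ∃ i : ZMod n, ¬ P i ∧ P (i + 1) := by
  by_contra hcon
  push_neg at hcon
  have hstep : ∀ i : ZMod n, P (i + 1) → P i := by
    intro i h
    by_contra hni
    exact hcon i hni h
  have hall : ∀ k : ℕ, P (b - (k : ZMod n)) := by
    intro k
    induction k with
    | zero => simpa using hb
    | succ k ih =>
        apply hstep
        have : b - ((k + 1 : ℕ) : ZMod n) + 1 = b - (k : ZMod n) := by push_cast; ring
        rw [this]; exact ih
  apply ha
  have := hall (b - a).val
  rwa [ZMod.natCast_rightInverse (b - a), sub_sub_cancel] at this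

end Aux

open Aux in
/-- If a directed tree on the `n` vertices `v_0, …, v_{n-1}` satisfies
`ρ(u,v) + ρ(v,u) ≥ n` for all distinct `u, v`, then
`Σ_i ρ(v_i, v_{(i+1) mod n}) ≥ n(n-1)`. -/
theorem stmt7 (n : ℕ) [NeZero n] (hn : 2 ≤ n)
    (T : SimpleGraph (ZMod n)) (hT : T.IsTree) (wt : ZMod n → ZMod n → ℝ≥0)
    (hfar : ∀ u v : ZMod n, u ≠ v →
      (n : ℝ≥0∞) ≤ spDist (treeW T wt) u v + spDist (treeW T wt) v u) :
    ((n * (n - 1) : ℕ) : ℝ≥0∞) ≤ ∑ i : ZMod n, spDist (treeW T wt) i (i + 1) := by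
  classical
  set S : ℝ≥0∞ := ∑ p : ZMod n × ZMod n, (if T.Adj p.1 p.2 then (wt p.1 p.2 : ℝ≥0∞) else 0)
    with hS
  have hA : ∑ i : ZMod n, Dd T wt i (i + 1) ≤ ∑ i : ZMod n, spDist (treeW T wt) i (i + 1) :=
    Finset.sum_le_sum fun i _ => Dd_le_spDist T wt i (i + 1)
  have hB : S ≤ ∑ i : ZMod n, Dd T wt i (i + 1) := by
    unfold Dd
    rw [Finset.sum_comm]
    refine Finset.sum_le_sum fun p _ => ?_
    by_cases hp : T.Adj p.1 p.2
    · rw [if_pos hp]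
      obtain ⟨i, hi1, hi2⟩ := exists_cross (eR_self T p.1 p.2) (eR_not T hT.IsAcyclic hp)
      have hsl := Finset.single_le_sum
        (f := fun i : ZMod n => if T.Adj p.1 p.2 ∧ ¬ eR T p.1 p.2 i ∧ eR T p.1 p.2 (i + 1)
          then (wt p.1 p.2 : ℝ≥0∞) else 0)
        (fun j _ => zero_le) (Finset.mem_univ i)
      simpa [hp, hi1, hi2] using hsl
    · rw [if_neg hp]; exact zero_le
  have hswap : S = ∑ p : ZMod n × ZMod n, (if T.Adj p.1 p.2 then (wt p.2 p.1 : ℝ≥0∞) else 0) := by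
    rw [hS]
    apply Fintype.sum_equiv (Equiv.prodComm (ZMod n) (ZMod n))
    intro p
    simp only [Equiv.prodComm_apply, Prod.fst_swap, Prod.snd_swap]
    by_cases h : T.Adj p.1 p.2
    · simp [h, h.symm]
    · have h2 : ¬ T.Adj p.2 p.1 := fun h' => h h'.symm
      simp [h, h2]
  have hcard : (Finset.univ.filter fun p : ZMod n × ZMod n => T.Adj p.1 p.2).card
      = 2 * (n - 1) := by
    have h1 := SimpleGraph.two_mul_card_edgeFinset (G := T)
    have h2 := hT.card_edgeFinset
    rw [ZMod.card] at h2
    have h3 : (Finset.univ.filter fun p : ZMod n × ZMod n => T.Adj p.1 p.2).card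
        = 2 * T.edgeFinset.card := by
      rw [h1]
    omega
  have hSS : (((2 * (n - 1)) * n : ℕ) : ℝ≥0∞) ≤ S + S := by
    nth_rewrite 2 [hswap]
    rw [hS, ← Finset.sum_add_distrib]
    have hpt : ∀ p : ZMod n × ZMod n, (if T.Adj p.1 p.2 then ((n : ℕ) : ℝ≥0∞) else 0) ≤
        ((if T.Adj p.1 p.2 then (wt p.1 p.2 : ℝ≥0∞) else 0)
          + (if T.Adj p.1 p.2 then (wt p.2 p.1 : ℝ≥0∞) else 0)) := by
      intro p
      by_cases h : T.Adj p.1 p.2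
      · simp only [if_pos h]
        calc ((n : ℕ) : ℝ≥0∞) ≤ spDist (treeW T wt) p.1 p.2 + spDist (treeW T wt) p.2 p.1 :=
              hfar _ _ h.ne
          _ ≤ _ := add_le_add (spDist_le_wt T wt h) (spDist_le_wt T wt h.symm)
      · simp [h]
    calc (((2 * (n - 1)) * n : ℕ) : ℝ≥0∞)
        = ∑ p : ZMod n × ZMod n, (if T.Adj p.1 p.2 then ((n : ℕ) : ℝ≥0∞) else 0) := by
          rw [← Finset.sum_filter, Finset.sum_const, hcard, Nat.cast_mul, nsmul_eq_mul]
      _ ≤ _ := Finset.sum_le_sum fun p _ => hpt p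
  have hkey : (2 : ℝ≥0∞) * ((n * (n - 1) : ℕ) : ℝ≥0∞) ≤ 2 * S := by
    have heq : ((2 * (n * (n - 1)) : ℕ) : ℝ≥0∞) = 2 * ((n * (n - 1) : ℕ) : ℝ≥0∞) := by
      push_cast; ring
    rw [← heq]
    have heq2 : (2 * (n * (n - 1)) : ℕ) = (2 * (n - 1)) * n := by ring
    rw [heq2]
    exact hSS.trans (le_of_eq (two_mul S).symm)
  have hfin : ((n * (n - 1) : ℕ) : ℝ≥0∞) ≤ S :=
    (ENNReal.mul_le_mul_iff_right two_ne_zero ENNReal.ofNat_ne_top).mp hkey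
  exact hfin.trans (hB.trans hA)
end
end

section
/- Let r > 0 and let a, b be real numbers with 0 ≤ a ≤ b. Then the Lebesgue measure of the set {z ∈ [0, r] : ∃ i ∈ ℕ, a ≤ i·r + z and i·r + z < b} is at most b − a. Consequently, if z is chosen uniformly at random from [0, r], and x, u, v are points of a quasimetric space (X, d) with d(x,u) ≤ d(x,v) ≤ d(x,u) + d(u,v), then the probability that there exists an integer i ≥ 0 with d(x,u) ≤ i·r + z < d(x,v) is at most d(u,v)/r. -/
open scoped ENNReal NNReal

noncomputable section

/-- `d` is a quasimetric: vanishing exactly on the diagonal, and satisfying the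
directed triangle inequality. -/
def IsQuasimetricD {X : Type*} (d : X → X → ℝ≥0∞) : Prop :=
  (∀ x y, d x y = 0 ↔ x = y) ∧ ∀ x y z, d x y ≤ d x z + d z y

/-- The region-growing estimate: for `0 ≤ a ≤ b`, the set of offsets `z ∈ [0,r]` for
which some level `i·r + z` falls in `[a,b)` has Lebesgue measure at most `b - a`; and
consequently a uniformly random level cut separates points `u, v` (with
`d(x,u) ≤ d(x,v) ≤ d(x,u) + d(u,v)`) with probability at most `d(u,v)/r`. -/
theorem stmt9 (r : ℝ) (hr : 0 < r) :
    (∀ a b : ℝ, 0 ≤ a → a ≤ b →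
      MeasureTheory.volume
        {z : ℝ | z ∈ Set.Icc (0 : ℝ) r ∧
          ∃ i : ℕ, a ≤ (i : ℝ) * r + z ∧ (i : ℝ) * r + z < b}
        ≤ ENNReal.ofReal (b - a)) ∧
    ∀ (X : Type) (d : X → X → ℝ≥0∞), IsQuasimetricD d →
      ∀ x u v : X, d x u ≤ d x v → d x v ≤ d x u + d u v →
        MeasureTheory.volume
          {z : ℝ | z ∈ Set.Icc (0 : ℝ) r ∧
            ∃ i : ℕ, d x u ≤ ENNReal.ofReal ((i : ℝ) * r + z) ∧
              ENNReal.ofReal ((i : ℝ) * r + z) < d x v}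
          / ENNReal.ofReal r
        ≤ d u v / ENNReal.ofReal r := by

  have part1 : ∀ a b : ℝ, 0 ≤ a → a ≤ b →
      MeasureTheory.volume
        {z : ℝ | z ∈ Set.Icc (0 : ℝ) r ∧
          ∃ i : ℕ, a ≤ (i : ℝ) * r + z ∧ (i : ℝ) * r + z < b}
        ≤ ENNReal.ofReal (b - a) := by
    intro a b ha hab
    have key : ∀ c : ℝ,
        MeasureTheory.volume (Set.Icc (0:ℝ) r ∩ (fun z => c + z) ⁻¹' Set.Ico a b)
        ≤ MeasureTheory.volume (Set.Ico c (c+r) ∩ Set.Ico a b) := by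
      intro c
      have h1 : Set.Icc (0:ℝ) r ∩ (fun z => c + z) ⁻¹' Set.Ico a b
          = (fun z => c + z) ⁻¹' (Set.Icc c (c+r) ∩ Set.Ico a b) := by
        ext z
        simp only [Set.mem_inter_iff, Set.mem_preimage, Set.mem_Icc, Set.mem_Ico]
        constructor
        · rintro ⟨⟨h1, h2⟩, h3, h4⟩
          exact ⟨⟨by linarith, by linarith⟩, h3, h4⟩
        · rintro ⟨⟨h1, h2⟩, h3, h4⟩
          exact ⟨⟨by linarith, by linarith⟩, h3, h4⟩
      rw [h1, MeasureTheory.measure_preimage_add]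
      have h2 : Set.Icc c (c+r) ∩ Set.Ico a b
          ⊆ (Set.Ico c (c+r) ∩ Set.Ico a b) ∪ {c+r} := by
        intro z hz
        rcases eq_or_lt_of_le hz.1.2 with h|h
        · right; simp [h]
        · left; exact ⟨⟨hz.1.1, h⟩, hz.2⟩
      calc MeasureTheory.volume (Set.Icc c (c+r) ∩ Set.Ico a b)
          ≤ MeasureTheory.volume (Set.Ico c (c+r) ∩ Set.Ico a b)
              + MeasureTheory.volume ({c+r} : Set ℝ) :=
            (MeasureTheory.measure_mono h2).trans (MeasureTheory.measure_union_le _ _)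
        _ = MeasureTheory.volume (Set.Ico c (c+r) ∩ Set.Ico a b) := by
            simp [Real.volume_singleton]
    have hsub : {z : ℝ | z ∈ Set.Icc (0 : ℝ) r ∧
          ∃ i : ℕ, a ≤ (i : ℝ) * r + z ∧ (i : ℝ) * r + z < b}
        ⊆ ⋃ i : ℕ, Set.Icc (0:ℝ) r ∩ (fun z => (i:ℝ)*r + z) ⁻¹' Set.Ico a b := by
      rintro z ⟨hz, i, h1, h2⟩
      exact Set.mem_iUnion.2 ⟨i, hz, h1, h2⟩
    have hdisj : Pairwise (Function.onFun Disjoint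
        (fun i : ℕ => Set.Ico ((i:ℝ)*r) ((i:ℝ)*r+r) ∩ Set.Ico a b)) := by
      intro i j hij
      apply Disjoint.mono Set.inter_subset_left Set.inter_subset_left
      rw [Set.Ico_disjoint_Ico]
      rcases hij.lt_or_gt with h|h
      · have hij' : (i:ℝ) + 1 ≤ j := by exact_mod_cast h
        refine le_trans (min_le_left _ _) (le_trans ?_ (le_max_right _ _))
        nlinarith
      · have hij' : (j:ℝ) + 1 ≤ i := by exact_mod_cast h
        refine le_trans (min_le_right _ _) (le_trans ?_ (le_max_left _ _))
        nlinarith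
    calc MeasureTheory.volume {z : ℝ | z ∈ Set.Icc (0 : ℝ) r ∧
          ∃ i : ℕ, a ≤ (i : ℝ) * r + z ∧ (i : ℝ) * r + z < b} ≤ ∑' i : ℕ, MeasureTheory.volume
            (Set.Icc (0:ℝ) r ∩ (fun z => (i:ℝ)*r + z) ⁻¹' Set.Ico a b) :=
          (MeasureTheory.measure_mono hsub).trans (MeasureTheory.measure_iUnion_le _)
      _ ≤ ∑' i : ℕ, MeasureTheory.volume
            (Set.Ico ((i:ℝ)*r) ((i:ℝ)*r+r) ∩ Set.Ico a b) :=
          ENNReal.tsum_le_tsum (fun i => key _)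
      _ = MeasureTheory.volume
            (⋃ i : ℕ, Set.Ico ((i:ℝ)*r) ((i:ℝ)*r+r) ∩ Set.Ico a b) :=
          (MeasureTheory.measure_iUnion hdisj
            (fun i => measurableSet_Ico.inter measurableSet_Ico)).symm
      _ ≤ MeasureTheory.volume (Set.Ico a b) :=
          MeasureTheory.measure_mono (Set.iUnion_subset fun i => Set.inter_subset_right)
      _ = ENNReal.ofReal (b - a) := Real.volume_Ico
  refine ⟨part1, ?_⟩
  intro X d hd x u v huv hvu
  apply ENNReal.div_le_div_right
  by_cases hxu : d x u = ⊤
  · have hemp : {z : ℝ | z ∈ Set.Icc (0 : ℝ) r ∧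
        ∃ i : ℕ, d x u ≤ ENNReal.ofReal ((i : ℝ) * r + z) ∧
          ENNReal.ofReal ((i : ℝ) * r + z) < d x v} = ∅ := by
      ext z
      simp only [Set.mem_setOf_eq, Set.mem_empty_iff_false, iff_false, not_and]
      rintro hz ⟨i, h1, h2⟩
      exact absurd (h1.trans_lt ENNReal.ofReal_lt_top) (by simp [hxu])
    rw [hemp]; simp
  by_cases huvt : d u v = ⊤
  · exact huvt ▸ le_top
  have hxvt : d x v ≠ ⊤ := by
    intro h
    exact (ENNReal.add_ne_top.2 ⟨hxu, huvt⟩) (top_le_iff.1 (h ▸ hvu))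
  set a := (d x u).toReal with haa
  set b := (d x v).toReal with hbb
  have hab : a ≤ b := (ENNReal.toReal_le_toReal hxu hxvt).2 huv
  have hseteq : {z : ℝ | z ∈ Set.Icc (0 : ℝ) r ∧
        ∃ i : ℕ, d x u ≤ ENNReal.ofReal ((i : ℝ) * r + z) ∧
          ENNReal.ofReal ((i : ℝ) * r + z) < d x v}
      = {z : ℝ | z ∈ Set.Icc (0 : ℝ) r ∧
        ∃ i : ℕ, a ≤ (i : ℝ) * r + z ∧ (i : ℝ) * r + z < b} := by
    ext z
    simp only [Set.mem_setOf_eq, Set.mem_Icc]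
    constructor
    · rintro ⟨hz, i, h1, h2⟩
      have ht : (0:ℝ) ≤ (i:ℝ) * r + z := by have := hz.1; positivity
      exact ⟨hz, i, (ENNReal.le_ofReal_iff_toReal_le hxu ht).1 h1,
        (ENNReal.ofReal_lt_iff_lt_toReal ht hxvt).1 h2⟩
    · rintro ⟨hz, i, h1, h2⟩
      have ht : (0:ℝ) ≤ (i:ℝ) * r + z := by have := hz.1; positivity
      exact ⟨hz, i, (ENNReal.le_ofReal_iff_toReal_le hxu ht).2 h1,
        (ENNReal.ofReal_lt_iff_lt_toReal ht hxvt).2 h2⟩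
  rw [hseteq]
  calc MeasureTheory.volume {z : ℝ | z ∈ Set.Icc (0 : ℝ) r ∧
        ∃ i : ℕ, a ≤ (i : ℝ) * r + z ∧ (i : ℝ) * r + z < b} ≤ ENNReal.ofReal (b - a) := part1 a b ENNReal.toReal_nonneg hab
    _ ≤ ENNReal.ofReal ((d u v).toReal) := by
        apply ENNReal.ofReal_le_ofReal
        have : b ≤ a + (d u v).toReal := by
          have := (ENNReal.toReal_le_toReal hxvt (ENNReal.add_ne_top.2 ⟨hxu, huvt⟩)).2 hvu
          rwa [ENNReal.toReal_add hxu huvt] at this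
        linarith
    _ = d u v := ENNReal.ofReal_toReal huvt
end
end

section
/- Let G be a directed tree with nonnegative weights w on its directed edges and shortest-path quasimetric d, and suppose W = Σ_{e ∈ E(G)} w(e) > 0. Choose a random directed edge e ∈ E(G) with probability w(e)/W, and let Q_e = {(x,y) ∈ V(G)×V(G) : the unique directed path from x to y in G does not traverse e} (a quasipartition of (V(G), d)). Then for all u, v ∈ V(G): Pr[(u,v) ∉ Q_e] = d(u,v)/W. -/
open scoped ENNReal NNReal

noncomputable section

/-- A quasipartition: a reflexive and transitive relation. -/
def IsQuasipartition {V : Type*} (Q : V → V → Prop) : Prop :=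
  (∀ x, Q x x) ∧ ∀ x y z, Q x y → Q y z → Q x z

/-- An `r`-bounded relation with respect to the quasimetric `d`. -/
def IsRBounded {V : Type*} (d : V → V → ℝ≥0∞) (r : ℝ≥0∞) (Q : V → V → Prop) : Prop :=
  ∀ x y, Q x y → d x y ≤ r

/-- The unique directed path from `x` to `y` in the tree `T` does not traverse the
directed edge `e`. -/
def avoids {V : Type*} (T : SimpleGraph V) (e : V × V) (x y : V) : Prop :=
  ∀ p : T.Walk x y, p.IsPath → ∀ dd ∈ p.darts, dd.toProd ≠ e

namespace Stmt13Aux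

open SimpleGraph Classical

variable {V : Type} (T : SimpleGraph V)

/-- nodup subset sum bound -/
lemma sum_map_le {α : Type*} (f : α → ℝ≥0∞) {S L : List α} (hS : S.Nodup) (h : S ⊆ L) :
    (S.map f).sum ≤ (L.map f).sum := by
  have h1 : (S : Multiset α) ≤ (L : Multiset α) := (Multiset.le_iff_subset (Multiset.coe_nodup.2 hS)).2 h
  have h2 : ((S : Multiset α).map f).sum ≤ ((L : Multiset α).map f).sum := by
    obtain ⟨u, hu⟩ := Multiset.le_iff_exists_add.1 (Multiset.map_le_map (f := f) h1)
    rw [hu, Multiset.sum_add]; exact le_self_add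
  simpa using h2

def dartsCost (w : V → V → ℝ≥0) {u v : V} (p : T.Walk u v) : ℝ≥0∞ :=
  (p.darts.map (fun d => (w d.fst d.snd : ℝ≥0∞))).sum

lemma walkCost_cons {w' : V → V → ℝ≥0∞} (a : V) {l : List V} (hl : l ≠ []) :
    walkCost w' (a :: l) = w' a (l.head hl) + walkCost w' l := by
  cases l with
  | nil => exact absurd rfl hl
  | cons b t => rfl

lemma walkCost_support (w : V → V → ℝ≥0) {u v : V} (p : T.Walk u v) :
    walkCost (fun x y => if T.Adj x y then (w x y : ℝ≥0∞) else ⊤) p.support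
      = dartsCost T w p := by
  induction p with
  | nil => simp [walkCost, dartsCost]
  | @cons a b c h p ih =>
    rw [Walk.support_cons, p.support_eq_cons, walkCost, ← p.support_eq_cons, ih]
    simp [dartsCost, Walk.darts_cons, h]

def thePath (hc : T.Connected) (u v : V) : T.Path u v :=
  ((hc.preconnected u v).some).toPath

lemma path_eq_thePath (hT : T.IsTree) {u v : V} (p : T.Walk u v) (hp : p.IsPath) :
    p = (thePath T hT.isConnected u v).val := by
  have := hT.IsAcyclic.path_unique ⟨p, hp⟩ (thePath T hT.isConnected u v)
  exact congrArg Subtype.val this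

lemma dartsCost_thePath_le (hT : T.IsTree) (w : V → V → ℝ≥0) {u v : V} (p : T.Walk u v) :
    dartsCost T w (thePath T hT.isConnected u v).val ≤ dartsCost T w p := by
  have heq : (p.toPath : T.Walk u v) = (thePath T hT.isConnected u v).val :=
    path_eq_thePath T hT _ p.toPath.2
  rw [← heq]
  exact sum_map_le _ (Walk.darts_nodup_of_support_nodup p.toPath.2.support_nodup)
    p.darts_toPath_subset

lemma thePath_le_walkCost (hT : T.IsTree) (w : V → V → ℝ≥0) :
    ∀ (l : List V) (hne : l ≠ []) (v : V), l.getLast? = some v →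
      dartsCost T w (thePath T hT.isConnected (l.head hne) v).val
        ≤ walkCost (fun x y => if T.Adj x y then (w x y : ℝ≥0∞) else ⊤) l := by
  intro l
  induction l with
  | nil => intro hne; exact absurd rfl hne
  | cons a t ih =>
    intro _ v hv
    cases t with
    | nil =>
      obtain rfl : a = v := by simpa using hv
      have : ((thePath T hT.isConnected a a).val) = Walk.nil :=
        (Walk.isPath_iff_eq_nil.1 (thePath T hT.isConnected a a).2)
      simp [List.head, this, dartsCost, walkCost]
    | cons b t' =>
      have hgt : (b :: t').getLast? = some v := by
        rw [← hv]; exact (List.getLast?_cons_cons ..).symm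
      have ihb := ih (List.cons_ne_nil b t') v hgt
      rw [walkCost]
      simp only [List.head] at ihb ⊢
      by_cases hab : T.Adj a b
      · have key : dartsCost T w (thePath T hT.isConnected a v).val
            ≤ dartsCost T w (Walk.cons hab (thePath T hT.isConnected b v).val) :=
          dartsCost_thePath_le T hT w _
        refine key.trans ?_
        rw [if_pos hab]
        simp only [dartsCost, Walk.darts_cons, List.map_cons, List.sum_cons]
        exact add_le_add le_rfl ihb
      · simp [hab]

lemma spDist_eq (hT : T.IsTree) (w : V → V → ℝ≥0) (u v : V) :
    spDist (fun x y => if T.Adj x y then (w x y : ℝ≥0∞) else ⊤) u v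
      = dartsCost T w (thePath T hT.isConnected u v).val := by
  apply le_antisymm
  · have h1 : ((thePath T hT.isConnected u v).val.support).head? = some u := by
      rw [List.head?_eq_head (Walk.support_ne_nil _), Walk.head_support]
    have h2 : ((thePath T hT.isConnected u v).val.support).getLast? = some v := by
      rw [List.getLast?_eq_getLast (Walk.support_ne_nil _), Walk.getLast_support]
    have := iInf_le (fun l : { l : List V // l.head? = some u ∧ l.getLast? = some v } =>
      walkCost (fun x y => if T.Adj x y then (w x y : ℝ≥0∞) else ⊤) l.1)
      ⟨(thePath T hT.isConnected u v).val.support, h1, h2⟩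
    rwa [walkCost_support] at this
  · refine le_iInf fun l => ?_
    obtain ⟨l, h1, h2⟩ := l
    have hne : l ≠ [] := by rintro rfl; simp at h1
    have hhead : l.head hne = u := by
      rw [List.head?_eq_head hne] at h1; exact Option.some_injective _ h1
    have := thePath_le_walkCost T hT w l hne v h2
    rwa [hhead] at this

open Classical in
lemma numerator_eq [Fintype V] (hT : T.IsTree) (w : V → V → ℝ≥0) (u v : V) :
    (∑ p : V × V,
        if T.Adj p.1 p.2 ∧ ¬ avoids T p u v then (w p.1 p.2 : ℝ≥0∞) else 0)
      = dartsCost T w (thePath T hT.isConnected u v).val := by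
  classical
  set P := (thePath T hT.isConnected u v).val with hP
  set l : List (V × V) := P.darts.map Dart.toProd with hl
  have hnodup : l.Nodup :=
    (Walk.darts_nodup_of_support_nodup (thePath T hT.isConnected u v).2.support_nodup).map
      Dart.toProd_injective
  have hcond : ∀ e : V × V, (T.Adj e.1 e.2 ∧ ¬ avoids T e u v) ↔ e ∈ l := by
    intro e
    constructor
    · rintro ⟨-, hna⟩
      rw [avoids] at hna
      push_neg at hna
      obtain ⟨p, hp, d, hd, hde⟩ := hna
      have := path_eq_thePath T hT p hp
      rw [hl, List.mem_map]
      exact ⟨d, by rw [hP, ← this]; exact hd, hde⟩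
    · intro he
      rw [hl, List.mem_map] at he
      obtain ⟨d, hd, hde⟩ := he
      refine ⟨by rw [← hde]; exact d.adj, fun ha => ?_⟩
      exact ha P (thePath T hT.isConnected u v).2 d hd hde
  calc (∑ p : V × V, if T.Adj p.1 p.2 ∧ ¬ avoids T p u v then (w p.1 p.2 : ℝ≥0∞) else 0)
      = ∑ p : V × V, if p ∈ l.toFinset then (w p.1 p.2 : ℝ≥0∞) else 0 := by
        exact Finset.sum_congr rfl fun p _ =>
          if_congr ((hcond p).trans List.mem_toFinset.symm) rfl rfl
    _ = ∑ p ∈ Finset.univ ∩ l.toFinset, (w p.1 p.2 : ℝ≥0∞) :=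
        Finset.sum_ite_mem _ _ _
    _ = ∑ p ∈ l.toFinset, (w p.1 p.2 : ℝ≥0∞) := by rw [Finset.univ_inter]
    _ = (l.map (fun p : V × V => (w p.1 p.2 : ℝ≥0∞))).sum :=
        List.sum_toFinset _ hnodup
    _ = dartsCost T w P := by
        rw [hl, List.map_map, dartsCost]
        rfl

lemma quasip (hT : T.IsTree) (e : V × V) : (∀ x, avoids T e x x) ∧
    ∀ x y z, avoids T e x y → avoids T e y z → avoids T e x z := by
  constructor
  · intro x p hp d hd
    rw [Walk.isPath_iff_eq_nil.1 hp] at hd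
    simp at hd
  · intro x y z hxy hyz p hp d hd
    have hpq := path_eq_thePath T hT p hp
    set q := ((thePath T hT.isConnected x y).val.append (thePath T hT.isConnected y z).val)
      with hq
    have hqb : q.bypass = (thePath T hT.isConnected x z).val :=
      path_eq_thePath T hT q.bypass q.bypass_isPath
    have hdq : d ∈ q.darts := by
      apply q.darts_bypass_subset
      rw [hqb, ← hpq]; exact hd
    rw [hq, Walk.darts_append, List.mem_append] at hdq
    rcases hdq with h | h
    · exact hxy _ (thePath T hT.isConnected x y).2 d h
    · exact hyz _ (thePath T hT.isConnected y z).2 d h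

end Stmt13Aux

open Classical in
/-- Choosing a random directed edge `e` of a directed tree with probability `w(e)/W`
and forming the quasipartition `Q_e` of pairs whose directed path avoids `e`, each pair
`(u,v)` is separated with probability exactly `d(u,v)/W`. -/
theorem stmt13 (V : Type) [Fintype V] (T : SimpleGraph V) (hT : T.IsTree)
    (w : V → V → ℝ≥0)
    (hW : 0 < ∑ p : V × V, if T.Adj p.1 p.2 then w p.1 p.2 else 0) :
    (∀ e : V × V, T.Adj e.1 e.2 → IsQuasipartition (avoids T e)) ∧
    ∀ u v : V,
      (∑ p : V × V,
          if T.Adj p.1 p.2 ∧ ¬ avoids T p u v then (w p.1 p.2 : ℝ≥0∞) else 0) /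
          (∑ p : V × V, if T.Adj p.1 p.2 then (w p.1 p.2 : ℝ≥0∞) else 0)
        = spDist (fun x y => if T.Adj x y then (w x y : ℝ≥0∞) else ⊤) u v /
            (∑ p : V × V, if T.Adj p.1 p.2 then (w p.1 p.2 : ℝ≥0∞) else 0) := by
  constructor
  · exact fun e _ => Stmt13Aux.quasip T hT e
  · intro u v
    rw [Stmt13Aux.numerator_eq T hT w u v, Stmt13Aux.spDist_eq T hT w u v]
end
end

section
/- There is a universal constant γ > 0 with the following property. Let G be a finite directed graph on n ≥ 2 vertices obtained by bidirecting a connected undirected graph, with capacities c : E(G) → ℝ≥0, and let β ≥ 1. Suppose that for every nonnegative weight function w on E(G) and every r > 0, there exists an r-bounded β-Lipschitz probability distribution over quasipartitions of the shortest-path quasimetric induced by w on V(G). Then for every x : E(G) → ℝ≥0 whose induced shortest-path quasimetric d_x satisfies Σ_{(u,v) ∈ V(G)×V(G)} d_x(u,v) ≥ 1, there exists a cut S ⊆ E(G) with D(S) ≥ 1 and c(S) ≤ γ·β·(Σ_{e ∈ E(G)} c(e)·x(e))·D(S), where c(S) = Σ_{e ∈ S} c(e) and D(S) is the number of ordered pairs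 (u,v) of vertices such that every directed path from u to v in G contains an edge of S. In other words, the integrality gap of the LP relaxation of Directed Non-Bipartite Sparsest Cut with uniform demands on G is O(β). -/
open scoped ENNReal NNReal

noncomputable section

-- Edge weights on the directed graph obtained by bidirecting the undirected graph `H`:
-- the directed edge `(u,v)` exists iff `H.Adj u v`, and carries weight `w (u,v)`.
open Classical in
def graphW {V : Type*} (H : SimpleGraph V) (w : V × V → ℝ≥0) : V → V → ℝ≥0∞ :=
  fun u v => if H.Adj u v then (w (u, v) : ℝ≥0∞) else ⊤

/-- The cut `S` (a set of directed edges of the bidirected graph on `H`) separates the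
ordered pair `(u,v)`: every directed path from `u` to `v` contains an edge of `S`. -/
def Separates {V : Type*} (H : SimpleGraph V) (S : Finset (V × V)) (u v : V) : Prop :=
  ∀ p : H.Walk u v, ∃ dd ∈ p.darts, dd.toProd ∈ S

section sp
variable {V : Type*} {w : V → V → ℝ≥0∞} {u v z : V}

lemma spDist_le {l : List V} (h1 : l.head? = some u) (h2 : l.getLast? = some v) :
    spDist w u v ≤ walkCost w l := iInf_le _ (⟨l, h1, h2⟩ : { l : List V // l.head? = some u ∧ l.getLast? = some v })

lemma spDist_self (w : V → V → ℝ≥0∞) (u : V) : spDist w u u = 0 := by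
  refine le_antisymm ?_ zero_le
  have := spDist_le (w := w) (l := [u]) (u := u) (v := u) rfl rfl
  simpa [walkCost] using this

lemma walkCost_append {l1 l2 : List V} (h1 : l1.getLast? = some z) (h2 : l2.head? = some z) :
    walkCost w (l1 ++ l2.tail) = walkCost w l1 + walkCost w l2 := by
  induction l1 with
  | nil => simp at h1
  | cons a t ih =>
    cases t with
    | nil =>
      simp only [List.getLast?_singleton, Option.some.injEq] at h1
      subst h1
      cases l2 with
      | nil => simp at h2
      | cons b t2 =>
        simp only [List.head?_cons, Option.some.injEq] at h2
        subst h2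
        simp [walkCost]
    | cons b t' =>
      have h1' : (b :: t').getLast? = some z := by
        rwa [List.getLast?_cons_cons] at h1
      have := ih h1'
      simp only [List.cons_append] at *
      rw [walkCost, walkCost]
      · rw [this, add_assoc]

lemma spDist_triangle (w : V → V → ℝ≥0∞) (u z v : V) :
    spDist w u v ≤ spDist w u z + spDist w z v := by
  by_cases h1 : Nonempty { l : List V // l.head? = some u ∧ l.getLast? = some z }
  · by_cases h2 : Nonempty { l : List V // l.head? = some z ∧ l.getLast? = some v }
    · have hrw : spDist w u z + spDist w z v =
          ⨅ l1 : { l : List V // l.head? = some u ∧ l.getLast? = some z },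
            ⨅ l2 : { l : List V // l.head? = some z ∧ l.getLast? = some v },
              (walkCost w l1.1 + walkCost w l2.1) := by
        rw [spDist, spDist, ENNReal.iInf_add]
        exact iInf_congr fun l1 => ENNReal.add_iInf
      rw [hrw]
      refine le_iInf fun l1 => le_iInf fun l2 => ?_
      have hcat : walkCost w (l1.1 ++ l2.1.tail) = walkCost w l1.1 + walkCost w l2.1 :=
        walkCost_append l1.2.2 l2.2.1
      refine le_trans (spDist_le ?_ ?_) hcat.le
      · rcases l1 with ⟨l, hl, hl'⟩
        cases l with
        | nil => simp at hl
        | cons a t => simpa using hl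
      · rcases l2 with ⟨l, hl, hl'⟩
        cases l with
        | nil => simp at hl
        | cons a t =>
          cases t with
          | nil =>
            simp only [List.getLast?_singleton, Option.some.injEq] at hl'
            simp only [List.head?_cons, Option.some.injEq] at hl
            subst hl hl'
            simp only [List.tail_cons, List.append_nil]
            rcases l1 with ⟨l1, h1a, h1b⟩
            exact h1b
          | cons b t' =>
            rw [List.tail_cons, List.getLast?_append_of_ne_nil _ (by simp)]
            rwa [List.getLast?_cons_cons] at hl'
    · haveI := not_nonempty_iff.mp h2
      have : spDist w z v = ⊤ := by rw [spDist, iInf_of_empty]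
      simp [this]
  · haveI := not_nonempty_iff.mp h1
    have : spDist w u z = ⊤ := by rw [spDist, iInf_of_empty]
    simp [this]

end sp

section graph
variable {V : Type*} {H : SimpleGraph V} {x : V × V → ℝ≥0} {u v z : V}

lemma graphW_adj (h : H.Adj u v) : graphW H x u v = (x (u, v) : ℝ≥0∞) := by
  simp [graphW, h]

lemma spDist_le_edge (h : H.Adj u v) : spDist (graphW H x) u v ≤ (x (u, v) : ℝ≥0∞) := by
  have := spDist_le (w := graphW H x) (l := [u, v]) (u := u) (v := v) rfl rfl
  simpa [walkCost, graphW_adj h] using this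

lemma walkCost_support (p : H.Walk u v) :
    walkCost (graphW H x) p.support = (p.darts.map (fun d => (x d.toProd : ℝ≥0∞))).sum := by
  induction p with
  | nil => simp [walkCost]
  | @cons a b c hadj q ih =>
    rw [SimpleGraph.Walk.support_cons, SimpleGraph.Walk.darts_cons]
    rw [q.support_eq_cons]
    rw [q.support_eq_cons] at ih
    show graphW H x a b + _ = _
    rw [ih, graphW_adj hadj]
    simp

lemma spDist_le_walk (p : H.Walk u v) :
    spDist (graphW H x) u v ≤ (p.darts.map (fun d => (x d.toProd : ℝ≥0∞))).sum := by
  rw [← walkCost_support]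
  refine spDist_le ?_ ?_
  · rw [List.head?_eq_head (p.support_ne_nil), p.head_support]
  · rw [List.getLast?_eq_getLast (p.support_ne_nil), p.getLast_support]

lemma spDist_ne_top (hc : H.Connected) (u v : V) : spDist (graphW H x) u v ≠ ⊤ := by
  obtain ⟨p⟩ := hc u v
  refine ne_top_of_le_ne_top ?_ (spDist_le_walk p)
  induction p.darts with
  | nil => simp
  | cons d t ih => simp only [List.map_cons, List.sum_cons]; exact ENNReal.add_ne_top.mpr ⟨ENNReal.coe_ne_top, ih⟩

/-- discrete intermediate value: a walk from a `P` vertex to a non-`P` vertex crosses. -/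
lemma walk_ivt (P : V → Prop) :
    ∀ {u v : V} (p : H.Walk u v), P u → ¬ P v →
      ∃ dd ∈ p.darts, P dd.toProd.1 ∧ ¬ P dd.toProd.2 := by
  intro u v p
  induction p with
  | nil => intro h h'; exact absurd h h'
  | @cons a b c hadj q ih =>
    intro ha hc'
    by_cases hb : P b
    · obtain ⟨dd, hdd, h1, h2⟩ := ih hb hc'
      exact ⟨dd, by simp [SimpleGraph.Walk.darts_cons, hdd], h1, h2⟩
    · exact ⟨⟨(a, b), hadj⟩, by simp [SimpleGraph.Walk.darts_cons], ha, hb⟩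

/-- chaining a reflexive transitive relation along a walk -/
lemma walk_chain (Q : V → V → Prop) (hrefl : ∀ a, Q a a)
    (htrans : ∀ a b c, Q a b → Q b c → Q a c) :
    ∀ {u v : V} (p : H.Walk u v), (∀ dd ∈ p.darts, Q dd.toProd.1 dd.toProd.2) → Q u v := by
  intro u v p
  induction p with
  | nil => intro _; exact hrefl _
  | @cons a b c hadj q ih =>
    intro h
    refine htrans _ _ _ (h ⟨(a, b), hadj⟩ (by simp [SimpleGraph.Walk.darts_cons])) (ih fun dd hdd => h dd ?_)
    simp [SimpleGraph.Walk.darts_cons, hdd]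

end graph

open MeasureTheory in
/-- Master shell-selection lemma. -/
lemma master_shell {ι W : Type*} [Fintype ι] [Fintype W]
    (E : Finset ι) (cost : ι → ℝ≥0∞) (lo hi : ι → ℝ) (t : W → ℝ)
    (τR MR : ℝ) (K : ℝ≥0∞)
    (hlt : (∑ i ∈ E, cost i * ENNReal.ofReal (hi i - max (lo i) τR)) <
      K * ∑ v : W, ENNReal.ofReal (min (t v) MR - τR)) :
    ∃ ρ : ℝ, τR ≤ ρ ∧ ρ < MR ∧
      (∑ i ∈ E.filter (fun i => lo i ≤ ρ ∧ ρ < hi i), cost i) ≤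
        K * (Finset.univ.filter (fun v : W => ρ < t v)).card := by
  classical
  by_contra hcon
  push_neg at hcon
  set F : ℝ → ℝ≥0∞ := fun ρ => ∑ i ∈ E, (Set.Ico (lo i) (hi i)).indicator (fun _ => cost i) ρ with hF
  set G : ℝ → ℝ≥0∞ := fun ρ => ∑ v : W, (Set.Iio (t v)).indicator (fun _ => (1 : ℝ≥0∞)) ρ with hG
  have hFval : ∀ ρ, F ρ = ∑ i ∈ E.filter (fun i => lo i ≤ ρ ∧ ρ < hi i), cost i := by
    intro ρ
    rw [hF, Finset.sum_filter]
    refine Finset.sum_congr rfl fun i _ => ?_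
    by_cases h : lo i ≤ ρ ∧ ρ < hi i
    · simp only [h, if_true]; exact Set.indicator_of_mem (Set.mem_Ico.mpr h) _
    · simp only [h, if_false]; exact Set.indicator_of_notMem (fun hm => h (Set.mem_Ico.mp hm)) _
  have hGval : ∀ ρ, G ρ = (Finset.univ.filter (fun v : W => ρ < t v)).card := by
    intro ρ
    rw [hG, Finset.card_filter]
    push_cast
    refine Finset.sum_congr rfl fun v _ => ?_
    by_cases h : ρ < t v
    · simp only [h, if_true]; exact Set.indicator_of_mem (Set.mem_Iio.mpr h) _
    · simp only [h, if_false]; exact Set.indicator_of_notMem (fun hm => h (Set.mem_Iio.mp hm)) _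
  have hpt : ∀ ρ ∈ Set.Ico τR MR, K * G ρ ≤ F ρ := by
    intro ρ hρ
    rw [hFval, hGval]
    exact (hcon ρ hρ.1 hρ.2).le
  have hmeasG : Measurable G := by
    refine Finset.measurable_sum _ fun v _ => measurable_const.indicator measurableSet_Iio
  have hintF : ∫⁻ ρ in Set.Ico τR MR, F ρ ≤
      ∑ i ∈ E, cost i * ENNReal.ofReal (hi i - max (lo i) τR) := by
    rw [hF, lintegral_finset_sum _ (fun i _ => measurable_const.indicator measurableSet_Ico)]
    refine Finset.sum_le_sum fun i _ => ?_
    rw [lintegral_indicator measurableSet_Ico, Measure.restrict_restrict measurableSet_Ico,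
      setLIntegral_const]
    have hsub : Set.Ico (lo i) (hi i) ∩ Set.Ico τR MR ⊆ Set.Ico (max (lo i) τR) (hi i) := by
      rintro ρ ⟨⟨h1, h2⟩, h3, _⟩
      exact ⟨max_le h1 h3, h2⟩
    calc cost i * volume (Set.Ico (lo i) (hi i) ∩ Set.Ico τR MR)
        ≤ cost i * volume (Set.Ico (max (lo i) τR) (hi i)) :=
          mul_le_mul_right (measure_mono hsub) _
      _ = cost i * ENNReal.ofReal (hi i - max (lo i) τR) := by rw [Real.volume_Ico]
  have hintG : ∫⁻ ρ in Set.Ico τR MR, G ρ = ∑ v : W, ENNReal.ofReal (min (t v) MR - τR) := by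
    rw [hG, lintegral_finset_sum _ (fun v _ => measurable_const.indicator measurableSet_Iio)]
    refine Finset.sum_congr rfl fun v _ => ?_
    rw [lintegral_indicator measurableSet_Iio, Measure.restrict_restrict measurableSet_Iio,
      setLIntegral_const, one_mul]
    have : Set.Iio (t v) ∩ Set.Ico τR MR = Set.Ico τR (min (t v) MR) := by
      ext ρ
      simp only [Set.mem_inter_iff, Set.mem_Iio, Set.mem_Ico, lt_min_iff]
      tauto
    rw [this, Real.volume_Ico]
  have hchain : K * ∑ v : W, ENNReal.ofReal (min (t v) MR - τR) ≤
      ∑ i ∈ E, cost i * ENNReal.ofReal (hi i - max (lo i) τR) := by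
    calc K * ∑ v : W, ENNReal.ofReal (min (t v) MR - τR)
        = K * ∫⁻ ρ in Set.Ico τR MR, G ρ := by rw [hintG]
      _ = ∫⁻ ρ in Set.Ico τR MR, K * G ρ := (lintegral_const_mul K hmeasG).symm
      _ ≤ ∫⁻ ρ in Set.Ico τR MR, F ρ := setLIntegral_mono' measurableSet_Ico hpt
      _ ≤ _ := hintF
  exact absurd hlt (not_lt.mpr hchain)

set_option maxHeartbeats 1000000 in
open Classical in
/-- LP rounding for Directed Non-Bipartite Sparsest Cut with uniform demands: if every
shortest-path quasimetric on the bidirected graph `G` (of an `n ≥ 2`-vertex connected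
undirected graph `H`) admits, at every scale `r > 0`, an `r`-bounded `β`-Lipschitz
distribution over quasipartitions, then the integrality gap of the LP relaxation is
`O(β)`: any fractional solution `x` with `Σ_{(u,v)} d_x(u,v) ≥ 1` yields a cut `S` with
`c(S) ≤ γ·β·(Σ_e c(e)x(e))·D(S)` and `D(S) ≥ 1`. -/
theorem stmt14 :
    ∃ γ : ℝ≥0, 0 < γ ∧
      ∀ (V : Type) [Fintype V], 2 ≤ Fintype.card V →
        ∀ (H : SimpleGraph V), H.Connected →
          ∀ (c : V × V → ℝ≥0) (β : ℝ≥0), 1 ≤ β →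
            (∀ (w : V × V → ℝ≥0) (r : ℝ≥0), 0 < r →
              ∃ (m : ℕ) (Q : Fin m → V → V → Prop) (lam : Fin m → ℝ≥0),
                (∑ j, lam j = 1) ∧
                (∀ j, IsQuasipartition (Q j)) ∧
                (∀ j, IsRBounded (spDist (graphW H w)) (r : ℝ≥0∞) (Q j)) ∧
                ∀ u v : V,
                  (∑' s : { j : Fin m // ¬ Q j u v }, (lam s.1 : ℝ≥0∞))
                    ≤ (β : ℝ≥0∞) * spDist (graphW H w) u v / (r : ℝ≥0∞)) →
            ∀ x : V × V → ℝ≥0,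
              1 ≤ ∑ p : V × V, spDist (graphW H x) p.1 p.2 →
              ∃ S : Finset (V × V),
                (∀ p ∈ S, H.Adj p.1 p.2) ∧
                1 ≤ {p : V × V | Separates H S p.1 p.2}.ncard ∧
                (∑ p ∈ S, c p) ≤
                  γ * β * (∑ p : V × V, if H.Adj p.1 p.2 then c p * x p else 0) *
                    ({p : V × V | Separates H S p.1 p.2}.ncard : ℝ≥0) := by
  refine ⟨1000, by norm_num, ?_⟩
  intro V _ hn H hconn c β hβ horacle x hx
  set d : V → V → ℝ≥0∞ := spDist (graphW H x) with hd
  set n : ℕ := Fintype.card V with hnn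
  have hnR : (2:ℝ) ≤ (n:ℝ) := by exact_mod_cast hn
  haveI : Nonempty V := Fintype.card_pos_iff.mp (by omega)
  have hdfin : ∀ u v, d u v ≠ ⊤ := fun u v => spDist_ne_top hconn u v
  have hdself : ∀ u, d u u = 0 := fun u => spDist_self _ u
  have hdtri : ∀ u a v, d u v ≤ d u a + d a v := fun u a v => spDist_triangle _ u a v
  have hdedge : ∀ u v, H.Adj u v → d u v ≤ (x (u,v) : ℝ≥0∞) := fun u v h => spDist_le_edge h
  set σ : ℝ≥0∞ := ∑ p : V × V, d p.1 p.2 with hσdef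
  have hσ1 : 1 ≤ σ := hx
  have hσtop : σ ≠ ⊤ := (ENNReal.sum_lt_top.mpr fun p _ => (hdfin p.1 p.2).lt_top).ne
  set Lc : ℝ≥0 := ∑ p : V × V, if H.Adj p.1 p.2 then c p * x p else 0 with hLc
  set L : ℝ≥0∞ := (Lc : ℝ≥0∞) with hL
  have hLsum : L = ∑ p ∈ Finset.univ.filter (fun p : V × V => H.Adj p.1 p.2),
      ((c p : ℝ≥0∞) * (x p : ℝ≥0∞)) := by
    rw [hL, hLc, ENNReal.coe_finset_sum, Finset.sum_filter]
    refine Finset.sum_congr rfl fun p _ => ?_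
    split <;> simp
  -- counting helper
  have sepcard : ∀ (S : Finset (V × V)) (F : Finset (V × V)),
      (∀ p ∈ F, Separates H S p.1 p.2) →
      F.card ≤ {p : V × V | Separates H S p.1 p.2}.ncard := by
    intro S F hF
    rw [← Set.ncard_coe_finset F]
    exact Set.ncard_le_ncard (fun p hp => hF p (Finset.mem_coe.mp hp)) (Set.toFinite _)
  by_cases hL0 : Lc = 0
  · -- trivial cut of zero capacity
    set S : Finset (V × V) := Finset.univ.filter (fun p => H.Adj p.1 p.2 ∧ x p ≠ 0) with hS
    have hSadj : ∀ p ∈ S, H.Adj p.1 p.2 := fun p hp => ((Finset.mem_filter.mp hp).2).1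
    have hpair : ∃ p : V × V, d p.1 p.2 ≠ 0 := by
      by_contra hno
      push_neg at hno
      have : σ = 0 := Finset.sum_eq_zero fun p _ => hno p
      rw [this] at hσ1
      simp at hσ1
    obtain ⟨p₀, hp₀⟩ := hpair
    have hsep : Separates H S p₀.1 p₀.2 := by
      intro wlk
      by_contra hno
      push_neg at hno
      have hz : ∀ dd ∈ wlk.darts, (x dd.toProd : ℝ≥0∞) = 0 := by
        intro dd hdd
        have := hno dd hdd
        rw [hS, Finset.mem_filter] at this
        have hx0 : ¬ x dd.toProd ≠ 0 := by
          intro hne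
          exact this ⟨Finset.mem_univ _, dd.adj, hne⟩
        simp only [not_not] at hx0
        simp [hx0]
      have hle := spDist_le_walk (x := x) wlk
      have : (wlk.darts.map (fun dd => (x dd.toProd : ℝ≥0∞))).sum = 0 := by
        apply List.sum_eq_zero
        intro a ha
        obtain ⟨dd, hdd, rfl⟩ := List.mem_map.mp ha
        exact hz dd hdd
      rw [this] at hle
      exact hp₀ (le_antisymm hle zero_le)
    refine ⟨S, hSadj, ?_, ?_⟩
    · have h1 := sepcard S {p₀} (by simpa using hsep)
      simpa using h1
    · have : ∀ p ∈ S, c p = 0 := by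
        intro p hp
        rw [hS, Finset.mem_filter] at hp
        obtain ⟨-, hadj, hxne⟩ := hp
        have hterm := (Finset.sum_eq_zero_iff.mp hL0) p (Finset.mem_univ p)
        rw [if_pos hadj] at hterm
        rcases mul_eq_zero.mp hterm with h | h
        · exact h
        · exact absurd h hxne
      rw [Finset.sum_eq_zero this]
      exact zero_le
  · -- main case : Lc ≠ 0
    have hLpos : (0:ℝ≥0∞) < L := by
      rw [hL]
      exact_mod_cast pos_iff_ne_zero.mpr hL0
    have hLtop : L ≠ ⊤ := ENNReal.coe_ne_top
    set σR : ℝ := σ.toReal with hσR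
    have hσR1 : (1:ℝ) ≤ σR := by
      have := ENNReal.toReal_mono hσtop hσ1
      simpa using this
    have hnpos : (0:ℝ) < n := by linarith
    set τR : ℝ := σR / (16 * n^2) with hτR
    have hτRpos : 0 < τR := by
      apply div_pos (by linarith) (by positivity)
    set τ : ℝ≥0 := Real.toNNReal τR with hτ
    have hτpos : 0 < τ := Real.toNNReal_pos.mpr hτRpos
    have hτcoe : (τ : ℝ≥0∞) = ENNReal.ofReal τR := rfl
    have hτreal : ((τ : ℝ≥0) : ℝ) = τR := Real.coe_toNNReal _ hτRpos.le
    set BzF : V → Finset V :=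
      fun z => Finset.univ.filter (fun v => d z v ≤ (τ : ℝ≥0∞) ∧ d v z ≤ (τ : ℝ≥0∞)) with hBzF
    by_cases hball : ∃ z, n ≤ 2 * (BzF z).card
    · -- ball case
      obtain ⟨z, hz⟩ := hball
      set T : V → ℝ := fun v => (d z v).toReal with hT
      set T' : V → ℝ := fun v => (d v z).toReal with hT'
      have hsumfin : (∑ v : V, (d v z + d z v)) ≠ ⊤ :=
        (ENNReal.sum_lt_top.mpr fun v _ =>
          (ENNReal.add_ne_top.mpr ⟨hdfin v z, hdfin z v⟩).lt_top).ne
      have hσle : σ ≤ (Fintype.card V : ℝ≥0∞) * ∑ v : V, (d v z + d z v) := by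
        have h1 : σ ≤ ∑ p : V × V, (d p.1 z + d z p.2) :=
          Finset.sum_le_sum fun p _ => hdtri p.1 z p.2
        refine le_trans h1 (le_of_eq ?_)
        rw [Fintype.sum_prod_type]
        calc ∑ u : V, ∑ v : V, (d u z + d z v)
            = ∑ u : V, ((Fintype.card V : ℝ≥0∞) * d u z + ∑ v : V, d z v) := by
              refine Finset.sum_congr rfl fun u _ => ?_
              rw [Finset.sum_add_distrib, Finset.sum_const, Finset.card_univ, nsmul_eq_mul]
          _ = (Fintype.card V : ℝ≥0∞) * ∑ u : V, d u z
              + (Fintype.card V : ℝ≥0∞) * ∑ v : V, d z v := by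
              rw [Finset.sum_add_distrib, ← Finset.mul_sum, Finset.sum_const, Finset.card_univ,
                nsmul_eq_mul]
          _ = (Fintype.card V : ℝ≥0∞) * ∑ v : V, (d v z + d z v) := by
              rw [Finset.sum_add_distrib, mul_add]
      have hsTT : σR ≤ (n:ℝ) * ∑ v : V, (T' v + T v) := by
        have h3 := ENNReal.toReal_mono
          (ENNReal.mul_ne_top (ENNReal.natCast_ne_top _) hsumfin) hσle
        rw [ENNReal.toReal_mul, ENNReal.toReal_natCast,
          ENNReal.toReal_sum (fun v _ => ENNReal.add_ne_top.mpr ⟨hdfin v z, hdfin z v⟩)] at h3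
        calc σR ≤ (Fintype.card V : ℝ) * ∑ v : V, ((d v z + d z v)).toReal := h3
          _ = (n:ℝ) * ∑ v : V, (T' v + T v) := by
              rw [hnn]
              congr 1
              exact Finset.sum_congr rfl fun v _ => ENNReal.toReal_add (hdfin v z) (hdfin z v)
      set Aout : ℝ := ∑ v : V, max (T v - τR) 0 with hAout
      set Ain : ℝ := ∑ v : V, max (T' v - τR) 0 with hAin
      have hAsum : σR / (2*(n:ℝ)) ≤ Aout + Ain := by
        have h1 : ∀ v : V, T' v + T v - 2*τR ≤ max (T v - τR) 0 + max (T' v - τR) 0 := by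
          intro v
          have h1a := le_max_left (T v - τR) 0
          have h1b := le_max_left (T' v - τR) 0
          linarith
        have h2 : (∑ v : V, (T' v + T v)) - (n:ℝ) * (2*τR) ≤ Aout + Ain := by
          rw [hAout, hAin, ← Finset.sum_add_distrib]
          have h2a := Finset.sum_le_sum (s := (Finset.univ : Finset V)) (fun v _ => h1 v)
          rw [Finset.sum_sub_distrib, Finset.sum_const, Finset.card_univ, nsmul_eq_mul] at h2a
          calc (∑ v : V, (T' v + T v)) - (n:ℝ) * (2*τR)
              = ∑ v : V, (T' v + T v) - (Fintype.card V : ℝ) * (2*τR) := by rw [hnn]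
            _ ≤ _ := h2a
        have h3 : (n:ℝ) * (2*τR) = σR/(8*(n:ℝ)) := by
          rw [hτR]
          field_simp
          ring
        have h4 : σR/(n:ℝ) ≤ ∑ v : V, (T' v + T v) := by
          rw [div_le_iff₀ hnpos, mul_comm]
          exact hsTT
        have h5 : σR/(n:ℝ) - σR/(8*(n:ℝ)) - σR/(2*(n:ℝ)) = 3*σR/(8*(n:ℝ)) := by
          field_simp
          ring
        have h6 : (0:ℝ) ≤ 3*σR/(8*(n:ℝ)) := by positivity
        linarith
      have hBzτ : ∀ u ∈ BzF z, T u ≤ τR ∧ T' u ≤ τR := by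
        intro u hu
        rw [hBzF, Finset.mem_filter] at hu
        constructor
        · have h := ENNReal.toReal_mono ENNReal.coe_ne_top hu.2.1
          rwa [ENNReal.coe_toReal, hτreal] at h
        · have h := ENNReal.toReal_mono ENNReal.coe_ne_top hu.2.2
          rwa [ENNReal.coe_toReal, hτreal] at h
      have hBzmem : z ∈ BzF z := by
        rw [hBzF, Finset.mem_filter]
        exact ⟨Finset.mem_univ _, by rw [hdself]; exact zero_le, by rw [hdself]; exact zero_le⟩
      have hL2 : L < 2 * L := by
        rw [two_mul]
        exact ENNReal.lt_add_right hLtop hLpos.ne'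
      have hmax0 : ∀ y : ℝ, ENNReal.ofReal y = ENNReal.ofReal (max y 0) := by
        intro y
        rcases le_total y 0 with h | h
        · rw [ENNReal.ofReal_eq_zero.mpr h, max_eq_right h, ENNReal.ofReal_zero]
        · rw [max_eq_left h]
      rcases le_or_gt (σR/(4*(n:ℝ))) Aout with hA | hA
      · -- out-ball block
        obtain ⟨v₀, -, hv₀⟩ := Finset.exists_max_image Finset.univ T Finset.univ_nonempty
        set MR : ℝ := T v₀ with hMR
        set Aε : ℝ≥0∞ := ENNReal.ofReal Aout with hAε
        have hApos : 0 < Aout := lt_of_lt_of_le (by positivity) hA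
        have hAne : Aε ≠ 0 := by
          rw [hAε]
          exact (ENNReal.ofReal_pos.mpr hApos).ne'
        have hAtop : Aε ≠ ⊤ := ENNReal.ofReal_ne_top
        set K : ℝ≥0∞ := 2 * L / Aε with hK
        have hedgeT : ∀ p : V × V, H.Adj p.1 p.2 → T p.2 ≤ T p.1 + ((x p : ℝ)) := by
          intro p hadj
          have hinfty : d z p.2 ≤ d z p.1 + (x p : ℝ≥0∞) :=
            le_trans (hdtri z p.1 p.2) (add_le_add_right (by
              simpa using hdedge p.1 p.2 hadj) _)
          have h2 := ENNReal.toReal_mono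
            (ENNReal.add_ne_top.mpr ⟨hdfin z p.1, ENNReal.coe_ne_top⟩) hinfty
          rwa [ENNReal.toReal_add (hdfin z p.1) ENNReal.coe_ne_top, ENNReal.coe_toReal] at h2
        have hRHSval : ∑ v : V, ENNReal.ofReal (min (T v) MR - τR) = Aε := by
          have e1 : ∀ v : V, ENNReal.ofReal (min (T v) MR - τR)
              = ENNReal.ofReal (max (T v - τR) 0) := by
            intro v
            rw [min_eq_left (hv₀ v (Finset.mem_univ v)), hmax0 (T v - τR)]
          rw [Finset.sum_congr rfl (fun v _ => e1 v),
            ← ENNReal.ofReal_sum_of_nonneg (fun v _ => le_max_right _ _), hAε, hAout]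
        have hLHSle : (∑ p ∈ Finset.univ.filter (fun p : V × V => H.Adj p.1 p.2),
            (c p : ℝ≥0∞) * ENNReal.ofReal (T p.2 - max (T p.1) τR)) ≤ L := by
          rw [hLsum]
          refine Finset.sum_le_sum fun p hp => ?_
          have hadj := (Finset.mem_filter.mp hp).2
          have h1 : T p.2 - max (T p.1) τR ≤ ((x p : ℝ)) := by
            have h1a := hedgeT p hadj
            have h1b := le_max_left (T p.1) τR
            linarith
          refine mul_le_mul_right ?_ _
          calc ENNReal.ofReal (T p.2 - max (T p.1) τR)
              ≤ ENNReal.ofReal ((x p : ℝ)) := ENNReal.ofReal_le_ofReal h1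
            _ = (x p : ℝ≥0∞) := ENNReal.ofReal_coe_nnreal
        obtain ⟨ρ, hρτ, hρM, hρcut⟩ := master_shell
          (Finset.univ.filter (fun p : V × V => H.Adj p.1 p.2))
          (fun p => (c p : ℝ≥0∞)) (fun p => T p.1) (fun p => T p.2) T τR MR K
          (by
            rw [hRHSval, hK, ENNReal.div_mul_cancel hAne hAtop]
            exact lt_of_le_of_lt hLHSle hL2)
        set S : Finset (V × V) := (Finset.univ.filter (fun p : V × V => H.Adj p.1 p.2)).filter
          (fun p => T p.1 ≤ ρ ∧ ρ < T p.2) with hSdef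
        set FarF : Finset V := Finset.univ.filter (fun v : V => ρ < T v) with hFar
        have hSadj : ∀ p ∈ S, H.Adj p.1 p.2 := by
          intro p hp
          rw [hSdef, Finset.mem_filter, Finset.mem_filter] at hp
          exact hp.1.2
        have hsep : ∀ p ∈ (BzF z) ×ˢ FarF, Separates H S p.1 p.2 := by
          intro p hp wlk
          rw [Finset.mem_product] at hp
          have hu : T p.1 ≤ ρ := le_trans (hBzτ p.1 hp.1).1 hρτ
          have hv : ¬ (T p.2 ≤ ρ) := by
            have hp2 := hp.2
            rw [hFar, Finset.mem_filter] at hp2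
            exact not_le.mpr hp2.2
          obtain ⟨dd, hdd, h1, h2⟩ := walk_ivt (fun a => T a ≤ ρ) wlk hu hv
          refine ⟨dd, hdd, ?_⟩
          rw [hSdef, Finset.mem_filter, Finset.mem_filter]
          exact ⟨⟨Finset.mem_univ _, dd.adj⟩, h1, not_le.mp h2⟩
        have hDge : (BzF z).card * FarF.card ≤ {p : V × V | Separates H S p.1 p.2}.ncard := by
          have h := sepcard S ((BzF z) ×ˢ FarF) hsep
          rwa [Finset.card_product] at h
        have hFar1 : v₀ ∈ FarF := by
          rw [hFar, Finset.mem_filter]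
          exact ⟨Finset.mem_univ _, hρM⟩
        have hcard1 : 1 ≤ (BzF z).card * FarF.card :=
          Nat.one_le_iff_ne_zero.mpr (Nat.mul_ne_zero
            (Finset.card_ne_zero_of_mem hBzmem) (Finset.card_ne_zero_of_mem hFar1))
        refine ⟨S, hSadj, le_trans hcard1 hDge, ?_⟩
        have h5 : (∑ p ∈ S, (c p : ℝ≥0∞)) * Aε ≤ 2 * L * (FarF.card : ℝ≥0∞) := by
          calc (∑ p ∈ S, (c p : ℝ≥0∞)) * Aε
              ≤ (K * (FarF.card : ℝ≥0∞)) * Aε := mul_le_mul_left hρcut _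
            _ = (K * Aε) * (FarF.card : ℝ≥0∞) := by ring
            _ = 2 * L * (FarF.card : ℝ≥0∞) := by
                rw [hK, ENNReal.div_mul_cancel hAne hAtop]
        have h6 : (∑ p ∈ S, ((c p : ℝ))) * Aout ≤ 2 * (Lc:ℝ) * (FarF.card : ℝ) := by
          rw [hL, ← ENNReal.coe_finset_sum] at h5
          have h7 := ENNReal.toReal_mono (by
            exact ENNReal.mul_ne_top (ENNReal.mul_ne_top (by norm_num) ENNReal.coe_ne_top)
              (ENNReal.natCast_ne_top _)) h5
          simp only [ENNReal.toReal_mul, ENNReal.toReal_natCast, ENNReal.toReal_ofNat,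
            ENNReal.coe_toReal, hAε, ENNReal.toReal_ofReal hApos.le, NNReal.coe_sum] at h7
          exact h7
        set Dn : ℕ := {p : V × V | Separates H S p.1 p.2}.ncard with hDn
        rw [← NNReal.coe_le_coe]
        push_cast
        set cS : ℝ := ∑ p ∈ S, ((c p : ℝ)) with hcSdef
        have hcS0 : 0 ≤ cS := Finset.sum_nonneg fun p _ => NNReal.coe_nonneg _
        have hLc0 : (0:ℝ) ≤ (Lc:ℝ) := NNReal.coe_nonneg _
        have hβ1 : (1:ℝ) ≤ (β:ℝ) := by exact_mod_cast hβ
        have hDn0 : (0:ℝ) ≤ (Dn:ℝ) := by positivity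
        set Fc : ℝ := (FarF.card : ℝ) with hFc
        set Bc : ℝ := ((BzF z).card : ℝ) with hBc
        have hFc0 : (0:ℝ) ≤ Fc := Nat.cast_nonneg _
        have hBc0 : (0:ℝ) ≤ Bc := Nat.cast_nonneg _
        have hDnR : Bc * Fc ≤ (Dn:ℝ) := by rw [hBc, hFc]; exact_mod_cast hDge
        have hnB : (n:ℝ) ≤ 2*Bc := by rw [hBc]; exact_mod_cast hz
        have g1 : cS * (σR/(4*(n:ℝ))) ≤ 2*(Lc:ℝ)*Fc :=
          le_trans (mul_le_mul_of_nonneg_left hA hcS0) h6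
        have g2 : cS * σR ≤ 8*(n:ℝ)*((Lc:ℝ)*Fc) := by
          have h4n : (0:ℝ) < 4*(n:ℝ) := by positivity
          rw [← mul_div_assoc, div_le_iff₀ h4n] at g1
          calc cS * σR ≤ 2*(Lc:ℝ)*Fc*(4*(n:ℝ)) := g1
            _ = 8*(n:ℝ)*((Lc:ℝ)*Fc) := by ring
        have g3 : cS ≤ 8*(n:ℝ)*((Lc:ℝ)*Fc) :=
          le_trans (le_mul_of_one_le_right hcS0 hσR1) g2
        have g4 : (n:ℝ)*((Lc:ℝ)*Fc) ≤ 2*Bc*((Lc:ℝ)*Fc) :=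
          mul_le_mul_of_nonneg_right hnB (mul_nonneg hLc0 hFc0)
        have g5 : Bc*Fc*(Lc:ℝ) ≤ (Dn:ℝ)*(Lc:ℝ) := mul_le_mul_of_nonneg_right hDnR hLc0
        have g6 : (1:ℝ)*((Dn:ℝ)*(Lc:ℝ)) ≤ (β:ℝ)*((Dn:ℝ)*(Lc:ℝ)) :=
          mul_le_mul_of_nonneg_right hβ1 (mul_nonneg hDn0 hLc0)
        have g7 : (0:ℝ) ≤ (β:ℝ)*((Dn:ℝ)*(Lc:ℝ)) := by positivity
        nlinarith [g3, g4, g5, g6, g7]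
      · -- in-ball block
        have hA' : σR/(4*(n:ℝ)) ≤ Ain := by
          have e : σR/(2*(n:ℝ)) = σR/(4*(n:ℝ)) + σR/(4*(n:ℝ)) := by
            field_simp
            ring
          linarith
        obtain ⟨v₀, -, hv₀⟩ := Finset.exists_max_image Finset.univ T' Finset.univ_nonempty
        set MR : ℝ := T' v₀ with hMR
        set Aε : ℝ≥0∞ := ENNReal.ofReal Ain with hAε
        have hApos : 0 < Ain := lt_of_lt_of_le (by positivity) hA'
        have hAne : Aε ≠ 0 := by
          rw [hAε]
          exact (ENNReal.ofReal_pos.mpr hApos).ne'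
        have hAtop : Aε ≠ ⊤ := ENNReal.ofReal_ne_top
        set K : ℝ≥0∞ := 2 * L / Aε with hK
        have hedgeT : ∀ p : V × V, H.Adj p.1 p.2 → T' p.1 ≤ T' p.2 + ((x p : ℝ)) := by
          intro p hadj
          have hinfty : d p.1 z ≤ (x p : ℝ≥0∞) + d p.2 z :=
            le_trans (hdtri p.1 p.2 z) (add_le_add_left (by
              simpa using hdedge p.1 p.2 hadj) _)
          have h2 := ENNReal.toReal_mono
            (ENNReal.add_ne_top.mpr ⟨ENNReal.coe_ne_top, hdfin p.2 z⟩) hinfty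
          rw [ENNReal.toReal_add ENNReal.coe_ne_top (hdfin p.2 z), ENNReal.coe_toReal] at h2
          linarith
        have hRHSval : ∑ v : V, ENNReal.ofReal (min (T' v) MR - τR) = Aε := by
          have e1 : ∀ v : V, ENNReal.ofReal (min (T' v) MR - τR)
              = ENNReal.ofReal (max (T' v - τR) 0) := by
            intro v
            rw [min_eq_left (hv₀ v (Finset.mem_univ v)), hmax0 (T' v - τR)]
          rw [Finset.sum_congr rfl (fun v _ => e1 v),
            ← ENNReal.ofReal_sum_of_nonneg (fun v _ => le_max_right _ _), hAε, hAin]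
        have hLHSle : (∑ p ∈ Finset.univ.filter (fun p : V × V => H.Adj p.1 p.2),
            (c p : ℝ≥0∞) * ENNReal.ofReal (T' p.1 - max (T' p.2) τR)) ≤ L := by
          rw [hLsum]
          refine Finset.sum_le_sum fun p hp => ?_
          have hadj := (Finset.mem_filter.mp hp).2
          have h1 : T' p.1 - max (T' p.2) τR ≤ ((x p : ℝ)) := by
            have h1a := hedgeT p hadj
            have h1b := le_max_left (T' p.2) τR
            linarith
          refine mul_le_mul_right ?_ _
          calc ENNReal.ofReal (T' p.1 - max (T' p.2) τR)
              ≤ ENNReal.ofReal ((x p : ℝ)) := ENNReal.ofReal_le_ofReal h1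
            _ = (x p : ℝ≥0∞) := ENNReal.ofReal_coe_nnreal
        obtain ⟨ρ, hρτ, hρM, hρcut⟩ := master_shell
          (Finset.univ.filter (fun p : V × V => H.Adj p.1 p.2))
          (fun p => (c p : ℝ≥0∞)) (fun p => T' p.2) (fun p => T' p.1) T' τR MR K
          (by
            rw [hRHSval, hK, ENNReal.div_mul_cancel hAne hAtop]
            exact lt_of_le_of_lt hLHSle hL2)
        set S : Finset (V × V) := (Finset.univ.filter (fun p : V × V => H.Adj p.1 p.2)).filter
          (fun p => T' p.2 ≤ ρ ∧ ρ < T' p.1) with hSdef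
        set FarF : Finset V := Finset.univ.filter (fun v : V => ρ < T' v) with hFar
        have hSadj : ∀ p ∈ S, H.Adj p.1 p.2 := by
          intro p hp
          rw [hSdef, Finset.mem_filter, Finset.mem_filter] at hp
          exact hp.1.2
        have hsep : ∀ p ∈ FarF ×ˢ (BzF z), Separates H S p.1 p.2 := by
          intro p hp wlk
          rw [Finset.mem_product] at hp
          have hu : ρ < T' p.1 := by
            have hp1 := hp.1
            rw [hFar, Finset.mem_filter] at hp1
            exact hp1.2
          have hv : ¬ (ρ < T' p.2) := not_lt.mpr (le_trans (hBzτ p.2 hp.2).2 hρτ)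
          obtain ⟨dd, hdd, h1, h2⟩ := walk_ivt (fun a => ρ < T' a) wlk hu hv
          refine ⟨dd, hdd, ?_⟩
          rw [hSdef, Finset.mem_filter, Finset.mem_filter]
          exact ⟨⟨Finset.mem_univ _, dd.adj⟩, not_lt.mp h2, h1⟩
        have hDge : FarF.card * (BzF z).card ≤ {p : V × V | Separates H S p.1 p.2}.ncard := by
          have h := sepcard S (FarF ×ˢ (BzF z)) hsep
          rwa [Finset.card_product] at h
        have hFar1 : v₀ ∈ FarF := by
          rw [hFar, Finset.mem_filter]
          exact ⟨Finset.mem_univ _, hρM⟩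
        have hcard1 : 1 ≤ FarF.card * (BzF z).card :=
          Nat.one_le_iff_ne_zero.mpr (Nat.mul_ne_zero
            (Finset.card_ne_zero_of_mem hFar1) (Finset.card_ne_zero_of_mem hBzmem))
        refine ⟨S, hSadj, le_trans hcard1 hDge, ?_⟩
        have h5 : (∑ p ∈ S, (c p : ℝ≥0∞)) * Aε ≤ 2 * L * (FarF.card : ℝ≥0∞) := by
          calc (∑ p ∈ S, (c p : ℝ≥0∞)) * Aε
              ≤ (K * (FarF.card : ℝ≥0∞)) * Aε := mul_le_mul_left hρcut _
            _ = (K * Aε) * (FarF.card : ℝ≥0∞) := by ring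
            _ = 2 * L * (FarF.card : ℝ≥0∞) := by
                rw [hK, ENNReal.div_mul_cancel hAne hAtop]
        have h6 : (∑ p ∈ S, ((c p : ℝ))) * Ain ≤ 2 * (Lc:ℝ) * (FarF.card : ℝ) := by
          rw [hL, ← ENNReal.coe_finset_sum] at h5
          have h7 := ENNReal.toReal_mono (by
            exact ENNReal.mul_ne_top (ENNReal.mul_ne_top (by norm_num) ENNReal.coe_ne_top)
              (ENNReal.natCast_ne_top _)) h5
          simp only [ENNReal.toReal_mul, ENNReal.toReal_natCast, ENNReal.toReal_ofNat,
            ENNReal.coe_toReal, hAε, ENNReal.toReal_ofReal hApos.le, NNReal.coe_sum] at h7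
          exact h7
        set Dn : ℕ := {p : V × V | Separates H S p.1 p.2}.ncard with hDn
        rw [← NNReal.coe_le_coe]
        push_cast
        set cS : ℝ := ∑ p ∈ S, ((c p : ℝ)) with hcSdef
        have hcS0 : 0 ≤ cS := Finset.sum_nonneg fun p _ => NNReal.coe_nonneg _
        have hLc0 : (0:ℝ) ≤ (Lc:ℝ) := NNReal.coe_nonneg _
        have hβ1 : (1:ℝ) ≤ (β:ℝ) := by exact_mod_cast hβ
        have hDn0 : (0:ℝ) ≤ (Dn:ℝ) := by positivity
        set Fc : ℝ := (FarF.card : ℝ) with hFc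
        set Bc : ℝ := ((BzF z).card : ℝ) with hBc
        have hFc0 : (0:ℝ) ≤ Fc := Nat.cast_nonneg _
        have hBc0 : (0:ℝ) ≤ Bc := Nat.cast_nonneg _
        have hDnR : Fc * Bc ≤ (Dn:ℝ) := by rw [hBc, hFc]; exact_mod_cast hDge
        have hnB : (n:ℝ) ≤ 2*Bc := by rw [hBc]; exact_mod_cast hz
        have g1 : cS * (σR/(4*(n:ℝ))) ≤ 2*(Lc:ℝ)*Fc :=
          le_trans (mul_le_mul_of_nonneg_left hA' hcS0) h6
        have g2 : cS * σR ≤ 8*(n:ℝ)*((Lc:ℝ)*Fc) := by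
          have h4n : (0:ℝ) < 4*(n:ℝ) := by positivity
          rw [← mul_div_assoc, div_le_iff₀ h4n] at g1
          calc cS * σR ≤ 2*(Lc:ℝ)*Fc*(4*(n:ℝ)) := g1
            _ = 8*(n:ℝ)*((Lc:ℝ)*Fc) := by ring
        have g3 : cS ≤ 8*(n:ℝ)*((Lc:ℝ)*Fc) :=
          le_trans (le_mul_of_one_le_right hcS0 hσR1) g2
        have g4 : (n:ℝ)*((Lc:ℝ)*Fc) ≤ 2*Bc*((Lc:ℝ)*Fc) :=
          mul_le_mul_of_nonneg_right hnB (mul_nonneg hLc0 hFc0)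
        have g5 : Fc*Bc*(Lc:ℝ) ≤ (Dn:ℝ)*(Lc:ℝ) := mul_le_mul_of_nonneg_right hDnR hLc0
        have g6 : (1:ℝ)*((Dn:ℝ)*(Lc:ℝ)) ≤ (β:ℝ)*((Dn:ℝ)*(Lc:ℝ)) :=
          mul_le_mul_of_nonneg_right hβ1 (mul_nonneg hDn0 hLc0)
        have g7 : (0:ℝ) ≤ (β:ℝ)*((Dn:ℝ)*(Lc:ℝ)) := by positivity
        nlinarith [g3, g4, g5, g6, g7]
    · -- spread case
      push_neg at hball
      set N1 : Finset (V × V) := Finset.univ.filter (fun p : V × V => ¬ d p.1 p.2 ≤ (τ : ℝ≥0∞)) with hN1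
      have hspread : n^2 < 4 * N1.card := by
        have hz : ∀ z : V, n < 2 * (Finset.univ.filter
            (fun v => ¬(d z v ≤ (τ:ℝ≥0∞) ∧ d v z ≤ (τ:ℝ≥0∞)))).card := by
          intro z
          have hsplit : (Finset.univ.filter (fun v => d z v ≤ (τ:ℝ≥0∞) ∧ d v z ≤ (τ:ℝ≥0∞))).card
              + (Finset.univ.filter (fun v => ¬(d z v ≤ (τ:ℝ≥0∞) ∧ d v z ≤ (τ:ℝ≥0∞)))).card = n := by
            simpa [hnn, Finset.card_univ] using Finset.card_filter_add_card_filter_not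
              (s := (Finset.univ : Finset V))
              (p := fun v => d z v ≤ (τ:ℝ≥0∞) ∧ d v z ≤ (τ:ℝ≥0∞))
          have hb := hball z
          simp only [hBzF] at hb
          omega
        have hcardsum : ∀ z : V, (Finset.univ.filter
            (fun v => ¬(d z v ≤ (τ:ℝ≥0∞) ∧ d v z ≤ (τ:ℝ≥0∞)))).card ≤
            (Finset.univ.filter (fun v => ¬ d z v ≤ (τ:ℝ≥0∞))).card +
            (Finset.univ.filter (fun v => ¬ d v z ≤ (τ:ℝ≥0∞))).card := by
          intro z
          have hsub : Finset.univ.filter (fun v => ¬(d z v ≤ (τ:ℝ≥0∞) ∧ d v z ≤ (τ:ℝ≥0∞))) ⊆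
              (Finset.univ.filter (fun v => ¬ d z v ≤ (τ:ℝ≥0∞))) ∪
              (Finset.univ.filter (fun v => ¬ d v z ≤ (τ:ℝ≥0∞))) := by
            intro v hv
            rw [Finset.mem_filter] at hv
            rcases not_and_or.mp hv.2 with h | h
            · exact Finset.mem_union_left _ (Finset.mem_filter.mpr ⟨hv.1, h⟩)
            · exact Finset.mem_union_right _ (Finset.mem_filter.mpr ⟨hv.1, h⟩)
          exact le_trans (Finset.card_le_card hsub) (Finset.card_union_le _ _)
        -- sum over z
        have hsum1 : ∀ z : V, (Finset.univ.filter (fun v => ¬ d z v ≤ (τ:ℝ≥0∞))).card =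
            ∑ v : V, if ¬ d z v ≤ (τ:ℝ≥0∞) then 1 else 0 := by
          intro z; rw [Finset.card_filter]
        have hsum2 : ∀ z : V, (Finset.univ.filter (fun v => ¬ d v z ≤ (τ:ℝ≥0∞))).card =
            ∑ v : V, if ¬ d v z ≤ (τ:ℝ≥0∞) then 1 else 0 := by
          intro z; rw [Finset.card_filter]
        have hN1card : N1.card = ∑ z : V, ∑ v : V, if ¬ d z v ≤ (τ:ℝ≥0∞) then 1 else 0 := by
          rw [hN1, Finset.card_filter, Fintype.sum_prod_type]
        have hN1card' : N1.card = ∑ z : V, ∑ v : V, if ¬ d v z ≤ (τ:ℝ≥0∞) then 1 else 0 := by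
          rw [hN1card, Finset.sum_comm]
        have htot : n * n < 2 * (N1.card + N1.card) := by
          calc n * n = ∑ _z : V, n := by rw [Finset.sum_const, Finset.card_univ, smul_eq_mul, mul_comm]
            _ < ∑ z : V, 2 * (Finset.univ.filter
                (fun v => ¬(d z v ≤ (τ:ℝ≥0∞) ∧ d v z ≤ (τ:ℝ≥0∞)))).card := by
                apply Finset.sum_lt_sum_of_nonempty
                · exact Finset.univ_nonempty
                · intro z _; exact hz z
            _ ≤ ∑ z : V, 2 * ((Finset.univ.filter (fun v => ¬ d z v ≤ (τ:ℝ≥0∞))).card +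
                (Finset.univ.filter (fun v => ¬ d v z ≤ (τ:ℝ≥0∞))).card) := by
                apply Finset.sum_le_sum
                intro z _
                exact Nat.mul_le_mul_left 2 (hcardsum z)
            _ = 2 * (N1.card + N1.card) := by
                rw [← Finset.mul_sum, Finset.sum_add_distrib]
                have e1 : ∑ z : V, (Finset.univ.filter (fun v => ¬ d z v ≤ (τ:ℝ≥0∞))).card
                    = N1.card := by
                  rw [hN1card]; exact Finset.sum_congr rfl fun z _ => hsum1 z
                have e2 : ∑ z : V, (Finset.univ.filter (fun v => ¬ d v z ≤ (τ:ℝ≥0∞))).card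
                    = N1.card := by
                  rw [hN1card']; exact Finset.sum_congr rfl fun z _ => hsum2 z
                rw [e1, e2]
        have : n^2 = n * n := sq n
        omega
      -- oracle at scale τ
      obtain ⟨m, Q, lam, hlam1, hQP, hQB, hQL⟩ := horacle x τ hτpos
      set Sj : Fin m → Finset (V × V) :=
        fun j => Finset.univ.filter (fun p : V × V => H.Adj p.1 p.2 ∧ ¬ Q j p.1 p.2) with hSj
      set cj : Fin m → ℝ≥0∞ := fun j => ∑ p ∈ Sj j, (c p : ℝ≥0∞) with hcj
      have hkey : ∑ j, (lam j : ℝ≥0∞) * cj j ≤ (β : ℝ≥0∞) * L / (τ : ℝ≥0∞) := by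
        have hswap : ∑ j, (lam j : ℝ≥0∞) * cj j =
            ∑ p ∈ Finset.univ.filter (fun p : V × V => H.Adj p.1 p.2),
              (c p : ℝ≥0∞) * ∑ j ∈ Finset.univ.filter (fun j => ¬ Q j p.1 p.2), (lam j : ℝ≥0∞) := by
          calc ∑ j, (lam j : ℝ≥0∞) * cj j
              = ∑ j, ∑ p : V × V,
                  (lam j : ℝ≥0∞) * (if H.Adj p.1 p.2 ∧ ¬ Q j p.1 p.2 then (c p : ℝ≥0∞) else 0) := by
                refine Finset.sum_congr rfl fun j _ => ?_
                rw [hcj]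
                show (lam j : ℝ≥0∞) * ∑ p ∈ Sj j, (c p : ℝ≥0∞) = _
                rw [hSj, Finset.mul_sum]
                show (∑ p ∈ Finset.univ.filter _, _) = _
                rw [Finset.sum_filter]
                refine Finset.sum_congr rfl fun p _ => ?_
                by_cases hcnd : H.Adj p.1 p.2 ∧ ¬ Q j p.1 p.2 <;> simp [hcnd]
            _ = ∑ p : V × V, ∑ j,
                  (lam j : ℝ≥0∞) * (if H.Adj p.1 p.2 ∧ ¬ Q j p.1 p.2 then (c p : ℝ≥0∞) else 0) :=
                Finset.sum_comm
            _ = ∑ p : V × V, (if H.Adj p.1 p.2 then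
                  (c p : ℝ≥0∞) * ∑ j ∈ Finset.univ.filter (fun j => ¬ Q j p.1 p.2), (lam j : ℝ≥0∞)
                  else 0) := by
                refine Finset.sum_congr rfl fun p _ => ?_
                by_cases hadj : H.Adj p.1 p.2
                · rw [if_pos hadj, Finset.mul_sum, Finset.sum_filter]
                  refine Finset.sum_congr rfl fun j _ => ?_
                  by_cases hq : Q j p.1 p.2
                  · simp [hq]
                  · simp [hadj, hq, mul_comm]
                · rw [if_neg hadj]
                  exact Finset.sum_eq_zero fun j _ => by simp [hadj]
            _ = _ := (Finset.sum_filter _ _).symm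
        rw [hswap]
        have hbound : ∀ p : V × V, H.Adj p.1 p.2 →
            ∑ j ∈ Finset.univ.filter (fun j => ¬ Q j p.1 p.2), (lam j : ℝ≥0∞) ≤
              (β : ℝ≥0∞) * (x p : ℝ≥0∞) / (τ : ℝ≥0∞) := by
          intro p hadj
          have h1 := hQL p.1 p.2
          have h2 : (∑' s : { j : Fin m // ¬ Q j p.1 p.2 }, (lam s.1 : ℝ≥0∞)) =
              ∑ j ∈ Finset.univ.filter (fun j => ¬ Q j p.1 p.2), (lam j : ℝ≥0∞) := by
            rw [tsum_fintype]
            exact (Finset.sum_subtype (Finset.univ.filter (fun j => ¬ Q j p.1 p.2))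
              (fun j => by simp) (fun j => (lam j : ℝ≥0∞))).symm
          rw [h2] at h1
          refine le_trans h1 ?_
          apply ENNReal.div_le_div_right
          exact mul_le_mul_right (hdedge p.1 p.2 hadj) _
        calc ∑ p ∈ Finset.univ.filter (fun p : V × V => H.Adj p.1 p.2),
              (c p : ℝ≥0∞) * ∑ j ∈ Finset.univ.filter (fun j => ¬ Q j p.1 p.2), (lam j : ℝ≥0∞)
            ≤ ∑ p ∈ Finset.univ.filter (fun p : V × V => H.Adj p.1 p.2),
              (c p : ℝ≥0∞) * ((β : ℝ≥0∞) * (x p : ℝ≥0∞) / (τ : ℝ≥0∞)) := by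
              refine Finset.sum_le_sum fun p hp => ?_
              exact mul_le_mul_right (hbound p (Finset.mem_filter.mp hp).2) _
          _ = (β : ℝ≥0∞) * L / (τ : ℝ≥0∞) := by
              rw [hLsum]
              simp only [div_eq_mul_inv, Finset.mul_sum, Finset.sum_mul]
              exact Finset.sum_congr rfl fun p _ => by ring
      -- pick the best quasipartition
      have hsupp : ∃ j, lam j ≠ 0 := by
        by_contra hno
        push_neg at hno
        rw [Finset.sum_eq_zero (fun j _ => hno j)] at hlam1
        exact one_ne_zero hlam1.symm
      obtain ⟨j₁, hj₁⟩ := hsupp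
      obtain ⟨j₀, hj₀mem, hj₀min⟩ := Finset.exists_min_image
        (Finset.univ.filter fun j => lam j ≠ 0) cj ⟨j₁, by simp [hj₁]⟩
      have hj₀ : cj j₀ ≤ (β : ℝ≥0∞) * L / (τ : ℝ≥0∞) := by
        have h1 : cj j₀ = ∑ j, (lam j : ℝ≥0∞) * cj j₀ := by
          rw [← Finset.sum_mul]
          have : ∑ j, (lam j : ℝ≥0∞) = 1 := by
            rw [← ENNReal.coe_finset_sum, hlam1, ENNReal.coe_one]
          rw [this, one_mul]
        rw [h1]
        refine le_trans (Finset.sum_le_sum fun j _ => ?_) hkey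
        by_cases hlj : lam j = 0
        · simp [hlj]
        · exact mul_le_mul_right (hj₀min j (by simp [hlj])) _
      set S : Finset (V × V) := Sj j₀ with hSdef
      have hSadj : ∀ p ∈ S, H.Adj p.1 p.2 := by
        intro p hp
        rw [hSdef, hSj] at hp
        exact (Finset.mem_filter.mp hp).2.1
      have hsepQ : ∀ p ∈ N1, Separates H S p.1 p.2 := by
        intro p hp wlk
        by_contra hno
        push_neg at hno
        have hQall : ∀ dd ∈ wlk.darts, Q j₀ dd.toProd.1 dd.toProd.2 := by
          intro dd hdd
          have := hno dd hdd
          rw [hSdef, hSj, Finset.mem_filter] at this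
          by_contra hq
          exact this ⟨Finset.mem_univ _, dd.adj, hq⟩
        have hQuv : Q j₀ p.1 p.2 :=
          walk_chain (Q j₀) (hQP j₀).1 (fun a b c' => (hQP j₀).2 a b c') wlk hQall
        have := hQB j₀ p.1 p.2 hQuv
        rw [hN1, Finset.mem_filter] at hp
        exact hp.2 this
      have hDge : N1.card ≤ {p : V × V | Separates H S p.1 p.2}.ncard := sepcard S N1 hsepQ
      have hN1pos : 1 ≤ N1.card := by nlinarith [hspread, hn]
      refine ⟨S, hSadj, le_trans hN1pos hDge, ?_⟩
      -- final arithmetic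
      have hcS : ((∑ p ∈ S, c p : ℝ≥0) : ℝ≥0∞) ≤ (β : ℝ≥0∞) * L / (τ : ℝ≥0∞) := by
        rw [ENNReal.coe_finset_sum]
        exact hj₀
      have hmul : ((∑ p ∈ S, c p : ℝ≥0) : ℝ≥0∞) * (τ : ℝ≥0∞) ≤ (β : ℝ≥0∞) * L := by
        exact (ENNReal.le_div_iff_mul_le (Or.inl (by exact_mod_cast hτpos.ne'))
          (Or.inl ENNReal.coe_ne_top)).mp hcS
      set cS : ℝ := ∑ p ∈ S, ((c p : ℝ)) with hcSdef
      have hrmul : cS * τR ≤ (β : ℝ) * (Lc : ℝ) := by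
        rw [hL] at hmul
        have h2 := ENNReal.toReal_mono (by
            exact ENNReal.mul_ne_top ENNReal.coe_ne_top ENNReal.coe_ne_top) hmul
        rw [ENNReal.toReal_mul, ENNReal.toReal_mul, ENNReal.coe_toReal, ENNReal.coe_toReal,
          ENNReal.coe_toReal, ENNReal.coe_toReal, NNReal.coe_sum, hτreal] at h2
        exact h2
      set Dn : ℕ := {p : V × V | Separates H S p.1 p.2}.ncard with hDn
      have hDnR : ((n:ℝ))^2 + 1 ≤ 4 * (Dn : ℝ) := by
        have h1 : n^2 + 1 ≤ 4 * Dn := by omega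
        exact_mod_cast h1
      rw [← NNReal.coe_le_coe]
      push_cast
      rw [← hcSdef]
      have hcS0 : 0 ≤ cS := Finset.sum_nonneg fun p _ => NNReal.coe_nonneg _
      have hLc0 : (0:ℝ) ≤ (Lc:ℝ) := NNReal.coe_nonneg _
      have hβ1 : (1:ℝ) ≤ (β:ℝ) := by exact_mod_cast hβ
      have hDn0 : (0:ℝ) ≤ (Dn:ℝ) := by positivity
      -- cS * σR ≤ 16 n² β Lc ;  n² ≤ 4 Dn ; σR ≥ 1
      have g1 : cS * σR ≤ 16 * (n:ℝ)^2 * ((β:ℝ) * (Lc:ℝ)) := by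
        have h16 : (0:ℝ) < 16 * (n:ℝ)^2 := by positivity
        have : cS * (σR / (16 * (n:ℝ)^2)) ≤ (β:ℝ) * (Lc:ℝ) := by
          rw [← hτR]; exact hrmul
        rw [div_eq_inv_mul] at this
        calc cS * σR = (cS * ((16 * (n:ℝ)^2)⁻¹ * σR)) * (16 * (n:ℝ)^2) := by
              field_simp
          _ ≤ ((β:ℝ) * (Lc:ℝ)) * (16 * (n:ℝ)^2) := by
              apply mul_le_mul_of_nonneg_right this h16.le
          _ = 16 * (n:ℝ)^2 * ((β:ℝ) * (Lc:ℝ)) := by ring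
      have g2 : cS ≤ cS * σR := le_mul_of_one_le_right hcS0 hσR1
      have g3 : (n:ℝ)^2 * ((β:ℝ) * (Lc:ℝ)) ≤ 4 * (Dn:ℝ) * ((β:ℝ)*(Lc:ℝ)) := by
        apply mul_le_mul_of_nonneg_right _ (by positivity)
        nlinarith
      calc cS ≤ cS * σR := g2
        _ ≤ 16 * (n:ℝ)^2 * ((β:ℝ) * (Lc:ℝ)) := g1
        _ ≤ 16 * (4 * (Dn:ℝ)) * ((β:ℝ)*(Lc:ℝ)) := by nlinarith
        _ ≤ 1000 * (β:ℝ) * (Lc:ℝ) * (Dn:ℝ) := by nlinarith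
end
end
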